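/- arXiv:1704.07104 — 7 statements merged into one kernel-verified Lean document; each statement's English description precedes it below -/
import Mathlib

section
/- The number of permutations of length n avoiding the classical pattern 231 equals the n-th Catalan number. -/
/-- `π` avoids the classical pattern 231. -/
def Avoids231 {n : ℕ} (π : Equiv.Perm (Fin n)) : Prop :=
  ¬ ∃ i j k : Fin n, i < j ∧ j < k ∧ π k < π i ∧ π i < π j

open Equiv Finset

namespace Av231

variable {n j : ℕ}

variable {n j : ℕ}

def mkFun (n j : ℕ) (hj : j ≤ n) (σ : Perm (Fin j)) (τ : Perm (Fin (n - j)))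
    (i : Fin (n + 1)) : Fin (n + 1) :=
  if h : i.val < j then
    ⟨(σ ⟨i.val, h⟩).val, by have := (σ ⟨i.val, h⟩).isLt; omega⟩
  else if h2 : i.val = j then ⟨n, by omega⟩
  else
    ⟨j + (τ ⟨i.val - (j + 1), by have := i.isLt; omega⟩).val, by
      have := (τ ⟨i.val - (j + 1), by have := i.isLt; omega⟩).isLt; omega⟩

theorem mkFun_lt (hj : j ≤ n) (σ : Perm (Fin j)) (τ : Perm (Fin (n - j)))
    {i : Fin (n + 1)} (h : i.val < j) :
    (mkFun n j hj σ τ i).val = (σ ⟨i.val, h⟩).val := by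
  simp [mkFun, h]

theorem mkFun_eq (hj : j ≤ n) (σ : Perm (Fin j)) (τ : Perm (Fin (n - j)))
    {i : Fin (n + 1)} (h : i.val = j) :
    (mkFun n j hj σ τ i).val = n := by
  simp [mkFun, h]

theorem mkFun_gt (hj : j ≤ n) (σ : Perm (Fin j)) (τ : Perm (Fin (n - j)))
    {i : Fin (n + 1)} (h : j < i.val) :
    (mkFun n j hj σ τ i).val
      = j + (τ ⟨i.val - (j + 1), by have := i.isLt; omega⟩).val := by
  have h1 : ¬ i.val < j := by omega
  have h2 : ¬ i.val = j := by omega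
  simp [mkFun, h1, h2]

theorem mkFun_injective (hj : j ≤ n) (σ : Perm (Fin j)) (τ : Perm (Fin (n - j))) :
    Function.Injective (mkFun n j hj σ τ) := by
  intro a b hab
  have hab' := congrArg Fin.val hab
  have ha := a.isLt; have hb := b.isLt
  rcases lt_trichotomy a.val j with h1 | h1 | h1 <;>
    rcases lt_trichotomy b.val j with h2 | h2 | h2
  · rw [mkFun_lt hj σ τ h1, mkFun_lt hj σ τ h2] at hab'
    have h4 := σ.injective (Fin.ext hab')
    exact Fin.ext (by simpa using congrArg Fin.val h4)
  · rw [mkFun_lt hj σ τ h1, mkFun_eq hj σ τ h2] at hab'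
    have := (σ ⟨a.val, h1⟩).isLt; omega
  · rw [mkFun_lt hj σ τ h1, mkFun_gt hj σ τ h2] at hab'
    have := (σ ⟨a.val, h1⟩).isLt; omega
  · rw [mkFun_eq hj σ τ h1, mkFun_lt hj σ τ h2] at hab'
    have := (σ ⟨b.val, h2⟩).isLt; omega
  · exact Fin.ext (h1.trans h2.symm)
  · rw [mkFun_eq hj σ τ h1, mkFun_gt hj σ τ h2] at hab'
    have := (τ ⟨b.val - (j + 1), by omega⟩).isLt; omega
  · rw [mkFun_gt hj σ τ h1, mkFun_lt hj σ τ h2] at hab'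
    have := (τ ⟨a.val - (j + 1), by omega⟩).isLt; omega
  · rw [mkFun_gt hj σ τ h1, mkFun_eq hj σ τ h2] at hab'
    have := (τ ⟨a.val - (j + 1), by omega⟩).isLt; omega
  · rw [mkFun_gt hj σ τ h1, mkFun_gt hj σ τ h2] at hab'
    have h3 : (τ ⟨a.val - (j + 1), by omega⟩).val = (τ ⟨b.val - (j + 1), by omega⟩).val := by omega
    have := congrArg Fin.val (τ.injective (Fin.ext h3))
    simp only at this
    exact Fin.ext (by omega)

noncomputable def mkPerm (n j : ℕ) (hj : j ≤ n) (σ : Perm (Fin j))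
    (τ : Perm (Fin (n - j))) : Perm (Fin (n + 1)) :=
  Equiv.ofBijective (mkFun n j hj σ τ)
    (Finite.injective_iff_bijective.mp (mkFun_injective hj σ τ))

@[simp] theorem mkPerm_apply (hj : j ≤ n) (σ : Perm (Fin j)) (τ : Perm (Fin (n - j)))
    (i : Fin (n + 1)) : mkPerm n j hj σ τ i = mkFun n j hj σ τ i := rfl

theorem mkPerm_avoids (hj : j ≤ n) (σ : Perm (Fin j)) (τ : Perm (Fin (n - j)))
    (hσ : Avoids231 σ) (hτ : Avoids231 τ) : Avoids231 (mkPerm n j hj σ τ) := by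
  rintro ⟨a, b, c, hab, hbc, h1, h2⟩
  simp only [mkPerm_apply] at h1 h2
  rw [Fin.lt_def] at hab hbc h1 h2
  have ha := a.isLt; have hb := b.isLt; have hc := c.isLt
  rcases lt_trichotomy a.val j with hA | hA | hA
  · -- a in left block
    have hC : c.val < j := by
      by_contra hC
      have hca : (mkFun n j hj σ τ c).val < (σ ⟨a.val, hA⟩).val := by
        rwa [mkFun_lt hj σ τ hA] at h1
      have hs := (σ ⟨a.val, hA⟩).isLt
      rcases eq_or_lt_of_le (not_lt.mp hC) with hC' | hC'
      · rw [mkFun_eq hj σ τ hC'.symm] at hca; omega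
      · rw [mkFun_gt hj σ τ hC'] at hca; omega
    have hB : b.val < j := by omega
    rw [mkFun_lt hj σ τ hA, mkFun_lt hj σ τ hB] at h2
    rw [mkFun_lt hj σ τ hA, mkFun_lt hj σ τ hC] at h1
    exact hσ ⟨⟨a.val, hA⟩, ⟨b.val, hB⟩, ⟨c.val, hC⟩,
      Fin.lt_def.mpr hab, Fin.lt_def.mpr hbc, Fin.lt_def.mpr h1, Fin.lt_def.mpr h2⟩
  · -- a = j
    rw [mkFun_eq hj σ τ hA] at h2
    have := (mkFun n j hj σ τ b).isLt; omega
  · -- a in right block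
    have hB : j < b.val := by omega
    have hC : j < c.val := by omega
    rw [mkFun_gt hj σ τ hA, mkFun_gt hj σ τ hB] at h2
    rw [mkFun_gt hj σ τ hA, mkFun_gt hj σ τ hC] at h1
    have hv1 := Nat.lt_of_add_lt_add_left h1
    have hv2 := Nat.lt_of_add_lt_add_left h2
    exact hτ ⟨⟨a.val - (j + 1), by omega⟩, ⟨b.val - (j + 1), by omega⟩,
      ⟨c.val - (j + 1), by omega⟩,
      Fin.mk_lt_mk.mpr (by omega), Fin.mk_lt_mk.mpr (by omega),
      Fin.lt_def.mpr hv1, Fin.lt_def.mpr hv2⟩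


variable {n : ℕ}

theorem key_lt (π : Perm (Fin (n + 1))) (hav : Avoids231 π) {j : Fin (n + 1)}
    (hπj : π j = Fin.last n) {i : Fin (n + 1)} (hij : i < j) : (π i).val < j.val := by
  have hsub : (Iio (π i)).image π.symm ⊆ (Iio j).erase i := by
    intro k hk
    simp only [Finset.mem_image, Finset.mem_Iio] at hk
    obtain ⟨v, hv, rfl⟩ := hk
    have hπk : π (π.symm v) = v := π.apply_symm_apply v
    have hne_i : π.symm v ≠ i := by
      intro h; rw [h] at hπk; exact absurd hπk (ne_of_gt hv)
    have hπi_ne : π i ≠ Fin.last n := by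
      intro h; exact absurd (π.injective (h.trans hπj.symm)) (ne_of_lt hij)
    have hπi_lt : π i < Fin.last n := lt_of_le_of_ne (Fin.le_last _) hπi_ne
    refine Finset.mem_erase.2 ⟨hne_i, Finset.mem_Iio.2 ?_⟩
    by_contra hle
    have hne_j : π.symm v ≠ j := by
      intro h; rw [h, hπj] at hπk
      exact absurd hπk (Ne.symm (ne_of_lt (hv.trans hπi_lt)))
    have hjk : j < π.symm v := lt_of_le_of_ne (not_lt.1 hle) (Ne.symm hne_j)
    exact hav ⟨i, j, π.symm v, hij, hjk, by rw [hπk]; exact hv, by rw [hπj]; exact hπi_lt⟩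
  have h1 : ((Iio (π i)).image π.symm).card = (π i).val := by
    rw [Finset.card_image_of_injective _ π.symm.injective, Fin.card_Iio]
  have h2 : ((Iio j).erase i).card = j.val - 1 := by
    rw [Finset.card_erase_of_mem (Finset.mem_Iio.2 hij), Fin.card_Iio]
  have h3 := Finset.card_le_card hsub
  have h4 : i.val < j.val := hij
  omega

theorem key_ge (π : Perm (Fin (n + 1))) (hav : Avoids231 π) {j : Fin (n + 1)}
    (hπj : π j = Fin.last n) {k : Fin (n + 1)} (hjk : j < k) :
    j.val ≤ (π k).val ∧ (π k).val < n := by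
  have himg : (Iio j).image π = Iio j := by
    apply Finset.eq_of_subset_of_card_le
    · intro v hv
      simp only [Finset.mem_image, Finset.mem_Iio] at hv
      obtain ⟨i, hi, rfl⟩ := hv
      exact Finset.mem_Iio.2 (Fin.lt_def.mpr (key_lt π hav hπj hi))
    · rw [Finset.card_image_of_injective _ π.injective]
  have hkn : (π k).val < n := by
    have h1 : π k ≠ Fin.last n := by
      intro h; exact absurd (π.injective (h.trans hπj.symm)) (ne_of_gt hjk)
    have := (π k).isLt
    have : (π k).val ≠ n := fun h => h1 (Fin.ext h)
    omega
  refine ⟨?_, hkn⟩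
  by_contra hlt
  have hmem : π k ∈ (Iio j).image π := by
    rw [himg]; exact Finset.mem_Iio.2 (Fin.lt_def.mpr (by omega))
  simp only [Finset.mem_image, Finset.mem_Iio] at hmem
  obtain ⟨i, hi, hik⟩ := hmem
  have : i = k := π.injective hik
  rw [this] at hi
  exact absurd hjk (asymm hi)


noncomputable def extL (j : ℕ) (hjn : j ≤ n) (π : Perm (Fin (n + 1)))
    (hlt : ∀ i : Fin (n + 1), i.val < j → (π i).val < j) : Perm (Fin j) :=
  Equiv.ofBijective
    (fun i => ⟨(π ⟨i.val, by have := i.isLt; omega⟩).val,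
      hlt ⟨i.val, by have := i.isLt; omega⟩ i.isLt⟩)
    (Finite.injective_iff_bijective.mp (by
      intro a b hab
      have h1 := congrArg Fin.val hab
      simp only at h1
      have h2 := π.injective (Fin.ext h1)
      have h3 := congrArg Fin.val h2
      simp only at h3
      exact Fin.ext h3))

theorem extL_apply (hjn : j ≤ n) (π : Perm (Fin (n + 1)))
    (hlt : ∀ i : Fin (n + 1), i.val < j → (π i).val < j) (i : Fin j)
    (h : i.val < n + 1) : (extL j hjn π hlt i).val = (π ⟨i.val, h⟩).val := rfl

noncomputable def extR (j : ℕ) (π : Perm (Fin (n + 1)))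
    (hge : ∀ k : Fin (n + 1), j < k.val → j ≤ (π k).val ∧ (π k).val < n) :
    Perm (Fin (n - j)) :=
  Equiv.ofBijective
    (fun t => ⟨(π ⟨j + 1 + t.val, by have := t.isLt; omega⟩).val - j, by
      have h := hge ⟨j + 1 + t.val, by have := t.isLt; omega⟩
        (show j < j + 1 + t.val by omega)
      omega⟩)
    (Finite.injective_iff_bijective.mp (by
      intro a b hab
      have ha := a.isLt; have hb := b.isLt
      have h1 : (π ⟨j + 1 + a.val, by omega⟩).val - j
          = (π ⟨j + 1 + b.val, by omega⟩).val - j := congrArg Fin.val hab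
      have hga := hge ⟨j + 1 + a.val, by omega⟩ (show j < j + 1 + a.val by omega)
      have hgb := hge ⟨j + 1 + b.val, by omega⟩ (show j < j + 1 + b.val by omega)
      have h2 : (π ⟨j + 1 + a.val, by omega⟩).val = (π ⟨j + 1 + b.val, by omega⟩).val := by
        omega
      have h3 := π.injective (Fin.ext h2)
      have h4 := congrArg Fin.val h3
      simp only at h4
      exact Fin.ext (by omega)))

theorem extR_apply (π : Perm (Fin (n + 1)))
    (hge : ∀ k : Fin (n + 1), j < k.val → j ≤ (π k).val ∧ (π k).val < n) (t : Fin (n - j))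
    (h : j + 1 + t.val < n + 1) :
    (extR j π hge t).val = (π ⟨j + 1 + t.val, h⟩).val - j := rfl

theorem extL_avoids (hjn : j ≤ n) (π : Perm (Fin (n + 1))) (hπ : Avoids231 π)
    (hlt : ∀ i : Fin (n + 1), i.val < j → (π i).val < j) :
    Avoids231 (extL j hjn π hlt) := by
  rintro ⟨a, b, c, hab, hbc, h1, h2⟩
  have ha := a.isLt; have hb := b.isLt; have hc := c.isLt
  have h1' : (π ⟨c.val, by omega⟩).val < (π ⟨a.val, by omega⟩).val := Fin.lt_def.mp h1
  have h2' : (π ⟨a.val, by omega⟩).val < (π ⟨b.val, by omega⟩).val := Fin.lt_def.mp h2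
  exact hπ ⟨⟨a.val, by omega⟩, ⟨b.val, by omega⟩, ⟨c.val, by omega⟩,
    Fin.mk_lt_mk.mpr hab, Fin.mk_lt_mk.mpr hbc, Fin.lt_def.mpr h1', Fin.lt_def.mpr h2'⟩

theorem extR_avoids (π : Perm (Fin (n + 1))) (hπ : Avoids231 π)
    (hge : ∀ k : Fin (n + 1), j < k.val → j ≤ (π k).val ∧ (π k).val < n) (hjn : j ≤ n) :
    Avoids231 (extR j π hge) := by
  rintro ⟨a, b, c, hab, hbc, h1, h2⟩
  have ha := a.isLt; have hb := b.isLt; have hc := c.isLt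
  have h1' : (π ⟨j + 1 + c.val, by omega⟩).val - j < (π ⟨j + 1 + a.val, by omega⟩).val - j :=
    Fin.lt_def.mp h1
  have h2' : (π ⟨j + 1 + a.val, by omega⟩).val - j < (π ⟨j + 1 + b.val, by omega⟩).val - j :=
    Fin.lt_def.mp h2
  have hga := hge ⟨j + 1 + a.val, by omega⟩ (show j < j + 1 + a.val by omega)
  have hgb := hge ⟨j + 1 + b.val, by omega⟩ (show j < j + 1 + b.val by omega)
  have hgc := hge ⟨j + 1 + c.val, by omega⟩ (show j < j + 1 + c.val by omega)
  exact hπ ⟨⟨j + 1 + a.val, by omega⟩, ⟨j + 1 + b.val, by omega⟩, ⟨j + 1 + c.val, by omega⟩,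
    Fin.mk_lt_mk.mpr (by omega), Fin.mk_lt_mk.mpr (by omega),
    Fin.lt_def.mpr (by omega), Fin.lt_def.mpr (by omega)⟩


noncomputable def G (n : ℕ)
    (x : Σ i : Fin (n + 1), {π : Perm (Fin i.val) // Avoids231 π}
      × {π : Perm (Fin (n - i.val)) // Avoids231 π}) :
    {π : Perm (Fin (n + 1)) // Avoids231 π} :=
  ⟨mkPerm n x.1.val (Nat.lt_succ_iff.mp x.1.isLt) x.2.1.val x.2.2.val,
    mkPerm_avoids _ _ _ x.2.1.prop x.2.2.prop⟩

set_option maxHeartbeats 2000000 in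
theorem G_inj (n : ℕ) : Function.Injective (G n) := by
  rintro ⟨jf, ⟨σ, hσ⟩, ⟨τ, hτ⟩⟩ ⟨jf', ⟨σ', hσ'⟩, ⟨τ', hτ'⟩⟩ hxy
  have hperm := congrArg Subtype.val hxy
  simp only [G] at hperm
  have happ : ∀ i, mkFun n jf.val (Nat.lt_succ_iff.mp jf.isLt) σ τ i
      = mkFun n jf'.val (Nat.lt_succ_iff.mp jf'.isLt) σ' τ' i :=
    fun i => Equiv.ext_iff.mp hperm i
  have hjj : jf = jf' := by
    by_contra hne
    have hne' : jf.val ≠ jf'.val := fun h => hne (Fin.ext h)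
    have h0 := congrArg Fin.val (happ ⟨jf.val, jf.isLt⟩)
    rw [mkFun_eq _ σ τ rfl] at h0
    rcases lt_or_gt_of_ne hne' with hlt | hgt
    · rw [mkFun_lt _ σ' τ' hlt] at h0
      have h1 := (σ' ⟨jf.val, hlt⟩).isLt
      have h2 : jf'.val ≤ n := Nat.lt_succ_iff.mp jf'.isLt
      omega
    · rw [mkFun_gt _ σ' τ' hgt] at h0
      have h1 := (τ' ⟨jf.val - (jf'.val + 1), by have := jf.isLt; omega⟩).isLt
      omega
  subst hjj
  have hσσ : σ = σ' := by
    apply Equiv.ext; intro i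
    have hi : ((⟨i.val, by have := i.isLt; have := jf.isLt; omega⟩ : Fin (n + 1))).val
        < jf.val := i.isLt
    have h0 := congrArg Fin.val
      (happ ⟨i.val, by have := i.isLt; have := jf.isLt; omega⟩)
    rw [mkFun_lt _ σ τ hi, mkFun_lt _ σ' τ' hi] at h0
    have h1 : σ ⟨i.val, hi⟩ = σ' ⟨i.val, hi⟩ := Fin.ext h0
    have e : (⟨i.val, hi⟩ : Fin jf.val) = i := Fin.ext rfl
    rwa [e] at h1
  have hττ : τ = τ' := by
    apply Equiv.ext; intro t
    have hb : t.val < n - jf.val := t.isLt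
    have ht : jf.val
        < ((⟨jf.val + 1 + t.val, by have := jf.isLt; omega⟩ : Fin (n + 1))).val :=
      (show jf.val < jf.val + 1 + t.val by omega)
    have h0 := congrArg Fin.val (happ ⟨jf.val + 1 + t.val, by have := jf.isLt; omega⟩)
    rw [mkFun_gt _ σ τ ht, mkFun_gt _ σ' τ' ht] at h0
    have h1 := Nat.add_left_cancel h0
    have h2 : τ ⟨jf.val + 1 + t.val - (jf.val + 1), by omega⟩
        = τ' ⟨jf.val + 1 + t.val - (jf.val + 1), by omega⟩ := Fin.ext h1
    have e : (⟨jf.val + 1 + t.val - (jf.val + 1), by omega⟩ : Fin (n - jf.val)) = t :=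
      Fin.ext (show jf.val + 1 + t.val - (jf.val + 1) = t.val by omega)
    rwa [e] at h2
  subst hσσ; subst hττ
  rfl

theorem G_surj (n : ℕ) : Function.Surjective (G n) := by
  rintro ⟨π, hπ⟩
  set jf := π.symm (Fin.last n) with hjf
  have hπj : π jf = Fin.last n := π.apply_symm_apply _
  have hjn : jf.val ≤ n := Nat.lt_succ_iff.mp jf.isLt
  have hlt : ∀ i : Fin (n + 1), i.val < jf.val → (π i).val < jf.val :=
    fun i h => key_lt π hπ hπj (Fin.lt_def.mpr h)
  have hge : ∀ k : Fin (n + 1), jf.val < k.val → jf.val ≤ (π k).val ∧ (π k).val < n :=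
    fun k h => key_ge π hπ hπj (Fin.lt_def.mpr h)
  refine ⟨⟨jf, ⟨extL jf.val hjn π hlt, extL_avoids hjn π hπ hlt⟩,
    ⟨extR jf.val π hge, extR_avoids π hπ hge hjn⟩⟩, ?_⟩
  apply Subtype.ext
  apply Equiv.ext
  intro i
  show mkFun n jf.val hjn (extL jf.val hjn π hlt) (extR jf.val π hge) i = π i
  apply Fin.ext
  rcases lt_trichotomy i.val jf.val with h | h | h
  · rw [mkFun_lt _ _ _ h]
    rfl
  · rw [mkFun_eq _ _ _ h]
    have e : i = jf := Fin.ext h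
    rw [e, hπj]
    rfl
  · rw [mkFun_gt _ _ _ h]
    have pf : i.val - (jf.val + 1) < n - jf.val := by have := i.isLt; omega
    have pf2 : jf.val + 1 + (i.val - (jf.val + 1)) < n + 1 := by have := i.isLt; omega
    have hR : (extR jf.val π hge ⟨i.val - (jf.val + 1), pf⟩).val
        = (π ⟨jf.val + 1 + (i.val - (jf.val + 1)), pf2⟩).val - jf.val := rfl
    have hi2 : (⟨jf.val + 1 + (i.val - (jf.val + 1)), pf2⟩ : Fin (n + 1)) = i :=
      Fin.ext (show jf.val + 1 + (i.val - (jf.val + 1)) = i.val by omega)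
    have hgi := hge i h
    exact (show jf.val + (extR jf.val π hge ⟨i.val - (jf.val + 1), pf⟩).val = (π i).val by
      rw [hR, hi2]; omega)

theorem card_step (n : ℕ) :
    Nat.card {π : Perm (Fin (n + 1)) // Avoids231 π}
      = ∑ i : Fin (n + 1),
          Nat.card {π : Perm (Fin i.val) // Avoids231 π}
            * Nat.card {π : Perm (Fin (n - i.val)) // Avoids231 π} := by
  classical
  rw [← Nat.card_eq_of_bijective (G n) ⟨G_inj n, G_surj n⟩]
  rw [Nat.card_eq_fintype_card, Fintype.card_sigma]
  refine Finset.sum_congr rfl fun i _ => ?_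
  rw [Fintype.card_prod, Nat.card_eq_fintype_card, Nat.card_eq_fintype_card]

theorem card_zero : Nat.card {π : Perm (Fin 0) // Avoids231 π} = 1 := by
  have hall : ∀ π : Perm (Fin 0), Avoids231 π := fun π h => by
    obtain ⟨i, -⟩ := h; exact i.elim0
  rw [Nat.card_congr (Equiv.subtypeUnivEquiv hall)]
  simp [Nat.card_eq_fintype_card]

end Av231

/-- The number of 231-avoiding permutations of length `n` is the `n`-th
Catalan number. -/
theorem card_avoids231_eq_catalan (n : ℕ) :
    Nat.card {π : Equiv.Perm (Fin n) // Avoids231 π} = catalan n := by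
  induction n using Nat.strong_induction_on with
  | _ n ih =>
    match n, ih with
    | 0, _ => simpa using Av231.card_zero
    | (m + 1), ih =>
      rw [Av231.card_step m, catalan_succ]
      refine Finset.sum_congr rfl fun i _ => ?_
      rw [ih i.val (by have := i.isLt; omega), ih (m - i.val) (by have := i.isLt; omega)]
end

section
/- (First Dominating Pattern Rule) Let m₁ = (σ, R₁) and m₂ = (σ, R₂) be mesh patterns and π a classical pattern with |π| ≤ |σ| + 1. If R₂ = R₁ ∪ {⟨a,b⟩} and the classical pattern σ^{⟨a,b⟩} obtained by inserting a point into box ⟨a,b⟩ of σ contains π, then a permutation avoids {π, m₁} if and only if it avoids {π, m₂}. -/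
def extFun {k n : ℕ} (α : Fin k → Fin n) : ℕ → ℕ := fun i =>
  if h0 : i = 0 then 0
  else if h1 : i ≤ k then ((α ⟨i - 1, by omega⟩ : Fin n) : ℕ) + 1
  else n + 1

/-- An occurrence of the mesh pattern `(τ, R)` in `π` given by index/value
injections `α`, `β` (using 1-indexed coordinates for the regions). -/
def MeshOcc {k n : ℕ} (τ : Equiv.Perm (Fin k)) (R : Finset (ℕ × ℕ))
    (π : Equiv.Perm (Fin n)) (α β : Fin k → Fin n) : Prop :=
  StrictMono α ∧ StrictMono β ∧ (∀ i, π (α i) = β (τ i)) ∧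
    ∀ p ∈ R, ∀ x : Fin n,
      ¬(extFun α p.1 < (x : ℕ) + 1 ∧ (x : ℕ) + 1 < extFun α (p.1 + 1) ∧
        extFun β p.2 < (π x : ℕ) + 1 ∧ (π x : ℕ) + 1 < extFun β (p.2 + 1))

def ContainsMesh {k n : ℕ} (τ : Equiv.Perm (Fin k)) (R : Finset (ℕ × ℕ))
    (π : Equiv.Perm (Fin n)) : Prop :=
  ∃ α β : Fin k → Fin n, MeshOcc τ R π α β

def AvoidsMesh {k n : ℕ} (τ : Equiv.Perm (Fin k)) (R : Finset (ℕ × ℕ))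
    (π : Equiv.Perm (Fin n)) : Prop :=
  ¬ ContainsMesh τ R π

/-- The classical pattern `τ` is contained in `f`. -/
def ContainsPat {k n : ℕ} (τ : Fin k → Fin k) (f : Fin n → Fin n) : Prop :=
  ∃ α : Fin k → Fin n, StrictMono α ∧ ∀ i j : Fin k, τ i < τ j ↔ f (α i) < f (α j)

/-- The permutation `σ^⟨a,b⟩` of length `m+1` obtained by inserting a point
into the box `⟨a,b⟩` of `σ` (0-indexed boxes). -/
def insertPoint {m : ℕ} (σ : Equiv.Perm (Fin m)) (a b : Fin (m + 1)) :
    Fin (m + 1) → Fin (m + 1) := fun x =>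
  if h0 : (x : ℕ) = a then b
  else if h1 : (x : ℕ) < a then
    have hx : (x : ℕ) < m := by have := a.isLt; omega
    if (σ ⟨x, hx⟩ : ℕ) < b then ⟨σ ⟨x, hx⟩, by have := (σ ⟨x, hx⟩).isLt; omega⟩
    else ⟨(σ ⟨x, hx⟩ : ℕ) + 1, by have := (σ ⟨x, hx⟩).isLt; omega⟩
  else
    have hx : (x : ℕ) - 1 < m := by have := x.isLt; omega
    if (σ ⟨(x : ℕ) - 1, hx⟩ : ℕ) < b then
      ⟨σ ⟨(x : ℕ) - 1, hx⟩, by have := (σ ⟨(x : ℕ) - 1, hx⟩).isLt; omega⟩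
    else ⟨(σ ⟨(x : ℕ) - 1, hx⟩ : ℕ) + 1, by have := (σ ⟨(x : ℕ) - 1, hx⟩).isLt; omega⟩

lemma containsPat_trans {k m n : ℕ} {τ : Fin k → Fin k} {f : Fin m → Fin m}
    {g : Fin n → Fin n} (h1 : ContainsPat τ f) (h2 : ContainsPat f g) :
    ContainsPat τ g := by
  obtain ⟨α, hα, hiff⟩ := h1
  obtain ⟨γ, hγ, hiff2⟩ := h2
  exact ⟨γ ∘ α, hγ.comp hα, fun i j => (hiff i j).trans (hiff2 _ _)⟩

/-- Insert the point `x` into position-box `a` of the index injection `α`. -/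
def insFun {m n : ℕ} (α : Fin m → Fin n) (a : Fin (m + 1)) (x : Fin n) :
    Fin (m + 1) → Fin n := fun i =>
  if h1 : (i : ℕ) < (a : ℕ) then α ⟨i, by omega⟩
  else if h2 : (i : ℕ) = (a : ℕ) then x
  else α ⟨(i : ℕ) - 1, by omega⟩

lemma insFun_lt {m n : ℕ} (α : Fin m → Fin n) (a : Fin (m + 1)) (x : Fin n)
    (i : Fin (m + 1)) (h : (i : ℕ) < (a : ℕ)) (hm : (i : ℕ) < m) :
    insFun α a x i = α ⟨i, hm⟩ := by
  simp only [insFun]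
  rw [dif_pos h]

lemma insFun_eq {m n : ℕ} (α : Fin m → Fin n) (a : Fin (m + 1)) (x : Fin n)
    (i : Fin (m + 1)) (h : (i : ℕ) = (a : ℕ)) :
    insFun α a x i = x := by
  simp only [insFun]
  rw [dif_neg (by omega), dif_pos h]

lemma insFun_gt {m n : ℕ} (α : Fin m → Fin n) (a : Fin (m + 1)) (x : Fin n)
    (i : Fin (m + 1)) (h : (a : ℕ) < (i : ℕ)) (hm : (i : ℕ) - 1 < m) :
    insFun α a x i = α ⟨(i : ℕ) - 1, hm⟩ := by
  simp only [insFun]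
  rw [dif_neg (by omega), dif_neg (by omega)]

lemma insFun_strictMono {m n : ℕ} {α : Fin m → Fin n} {a : Fin (m + 1)} {x : Fin n}
    (hα : StrictMono α)
    (hlo : extFun α (a : ℕ) < (x : ℕ) + 1)
    (hhi : (x : ℕ) + 1 < extFun α ((a : ℕ) + 1)) :
    StrictMono (insFun α a x) := by
  have hlo' : ∀ j : Fin m, (j : ℕ) + 1 = (a : ℕ) → ((α j : Fin n) : ℕ) < x := by
    intro j hj
    simp only [extFun] at hlo
    rw [dif_neg (by omega), dif_pos (by omega)] at hlo
    have e : (⟨(a : ℕ) - 1, by omega⟩ : Fin m) = j := Fin.ext (by first | (simp; omega) | simp)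
    rw [e] at hlo
    omega
  have hhi' : ∀ j : Fin m, (j : ℕ) = (a : ℕ) → ((x : ℕ)) < α j := by
    intro j hj
    simp only [extFun] at hhi
    rw [dif_neg (by omega), dif_pos (by omega)] at hhi
    have e : (⟨(a : ℕ) + 1 - 1, by omega⟩ : Fin m) = j := Fin.ext (by first | (simp; omega) | simp)
    rw [e] at hhi
    omega
  rw [Fin.strictMono_iff_lt_succ]
  intro i
  rcases lt_trichotomy ((i : ℕ) + 1) (a : ℕ) with h | h | h
  · rw [insFun_lt α a x i.castSucc (by first | (simp; omega) | simp) (by first | (simp; omega) | simp),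
      insFun_lt α a x i.succ (by first | (simp; omega) | simp) (by first | (simp; omega) | simp)]
    exact hα (by simp [Fin.lt_def])
  · rw [insFun_lt α a x i.castSucc (by first | (simp; omega) | simp) (by first | (simp; omega) | simp),
      insFun_eq α a x i.succ (by first | (simp; omega) | simp)]
    rw [Fin.lt_def]
    exact hlo' ⟨(i : ℕ), by omega⟩ (by simpa using h)
  · by_cases h2 : (i : ℕ) = (a : ℕ)
    · rw [insFun_eq α a x i.castSucc (by simpa using h2),
        insFun_gt α a x i.succ (by first | (simp; omega) | simp) (by first | (simp; omega) | simp)]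
      rw [Fin.lt_def]
      have := hhi' ⟨(i : ℕ) + 1 - 1, by omega⟩ (by first | (simp; omega) | simp)
      exact this
    · have h3 : (a : ℕ) < (i : ℕ) := by omega
      rw [insFun_gt α a x i.castSucc (by simpa using h3) (by first | (simp; omega) | simp),
        insFun_gt α a x i.succ (by first | (simp; omega) | simp) (by first | (simp; omega) | simp)]
      exact hα (by simp [Fin.lt_def]; omega)

lemma key_occ {m n : ℕ} (σ : Equiv.Perm (Fin m)) (a b : Fin (m + 1))
    (ω : Equiv.Perm (Fin n)) (α β : Fin m → Fin n)
    (hα : StrictMono α) (hβ : StrictMono β)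
    (hval : ∀ i, ω (α i) = β (σ i)) (x : Fin n)
    (hx1 : extFun α (a : ℕ) < (x : ℕ) + 1)
    (hx2 : (x : ℕ) + 1 < extFun α ((a : ℕ) + 1))
    (hy1 : extFun β (b : ℕ) < ((ω x : Fin n) : ℕ) + 1)
    (hy2 : ((ω x : Fin n) : ℕ) + 1 < extFun β ((b : ℕ) + 1)) :
    ContainsPat (insertPoint σ a b) (⇑ω) := by
  refine ⟨insFun α a x, insFun_strictMono hα hx1 hx2, ?_⟩
  have hβ' := insFun_strictMono hβ hy1 hy2
  have hcomm : ∀ i : Fin (m + 1),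
      ω (insFun α a x i) = insFun β b (ω x) (insertPoint σ a b i) := by
    intro i
    rcases lt_trichotomy ((i : ℕ)) (a : ℕ) with h | h | h
    · have him : (i : ℕ) < m := by omega
      rw [insFun_lt α a x i h him, hval ⟨(i : ℕ), him⟩]
      simp only [insertPoint]
      rw [dif_neg (by omega), dif_pos h]
      split
      · next hb =>
        rw [insFun_lt β b (ω x) _ (by simpa using hb) (by simp)]
      · next hb =>
        rw [insFun_gt β b (ω x) _ (by first | (simp; omega) | simp) (by simp)]
        exact congrArg β (Fin.ext (by simp))
    · rw [insFun_eq α a x i (by omega)]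
      simp only [insertPoint]
      rw [dif_pos h]
      rw [insFun_eq β b (ω x) b rfl]
    · have him : (i : ℕ) - 1 < m := by omega
      rw [insFun_gt α a x i h him, hval ⟨(i : ℕ) - 1, him⟩]
      simp only [insertPoint]
      rw [dif_neg (by omega), dif_neg (by omega)]
      split
      · next hb =>
        rw [insFun_lt β b (ω x) _ (by simpa using hb) (by simp)]
      · next hb =>
        rw [insFun_gt β b (ω x) _ (by first | (simp; omega) | simp) (by simp)]
        exact congrArg β (Fin.ext (by simp))
  intro i j
  rw [hcomm i, hcomm j]
  exact (hβ'.lt_iff_lt).symm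

/-- First Dominating Pattern Rule. -/
theorem first_dominating_pattern_rule {l m : ℕ}
    (π : Equiv.Perm (Fin l)) (σ : Equiv.Perm (Fin m))
    (R₁ R₂ : Finset (ℕ × ℕ)) (a b : Fin (m + 1))
    (hlen : l ≤ m + 1)
    (hR : R₂ = R₁ ∪ {((a : ℕ), (b : ℕ))})
    (hcont : ContainsPat (⇑π) (insertPoint σ a b)) :
    ∀ {n : ℕ} (ω : Equiv.Perm (Fin n)),
      (¬ ContainsPat (⇑π) (⇑ω) ∧ AvoidsMesh σ R₁ ω) ↔
        (¬ ContainsPat (⇑π) (⇑ω) ∧ AvoidsMesh σ R₂ ω) := by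
  intro n ω
  constructor
  · rintro ⟨h1, h2⟩
    refine ⟨h1, ?_⟩
    rintro ⟨α, β, hm1, hm2, hm3, hm4⟩
    exact h2 ⟨α, β, hm1, hm2, hm3, fun p hp =>
      hm4 p (by rw [hR]; exact Finset.mem_union_left _ hp)⟩
  · rintro ⟨h1, h2⟩
    refine ⟨h1, ?_⟩
    rintro ⟨α, β, hm1, hm2, hm3, hm4⟩
    by_cases hbox : ∃ x : Fin n,
        extFun α (a : ℕ) < (x : ℕ) + 1 ∧ (x : ℕ) + 1 < extFun α ((a : ℕ) + 1) ∧
        extFun β (b : ℕ) < ((ω x : Fin n) : ℕ) + 1 ∧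
        ((ω x : Fin n) : ℕ) + 1 < extFun β ((b : ℕ) + 1)
    · obtain ⟨x, hx1, hx2, hy1, hy2⟩ := hbox
      exact h1 (containsPat_trans hcont
        (key_occ σ a b ω α β hm1 hm2 hm3 x hx1 hx2 hy1 hy2))
    · push_neg at hbox
      refine h2 ⟨α, β, hm1, hm2, hm3, fun p hp x hx => ?_⟩
      rw [hR, Finset.mem_union, Finset.mem_singleton] at hp
      rcases hp with hp | hp
      · exact hm4 p hp x hx
      · subst hp
        obtain ⟨a1, a2, a3, a4⟩ := hx
        exact absurd a4 (Nat.not_lt.mpr (hbox x a1 a2 a3))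
end

section
/- (Key step for Lemma on forced monotone boxes) Let m = (σ, R) be a mesh pattern with ⟨a,b⟩ ∉ R, and let π be a classical pattern contained in σ^{⟨a,b⟩_a}, the pattern obtained by inserting an ascent into box ⟨a,b⟩ of m. Then in any occurrence of m in a permutation ρ avoiding π, the points of ρ lying in the region corresponding to box ⟨a,b⟩ form a (possibly empty) decreasing subsequence of ρ. -/
/-- The permutation `σ^{⟨a,b⟩_a}` of length `m+2` obtained by inserting an
ascent into the box `⟨a,b⟩` of `σ` (0-indexed boxes). -/
def insertAscent {m : ℕ} (σ : Equiv.Perm (Fin m)) (a b : Fin (m + 1)) :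
    Fin (m + 2) → Fin (m + 2) := fun x =>
  if h0 : (x : ℕ) = a then ⟨b, by have := b.isLt; omega⟩
  else if h1 : (x : ℕ) = (a : ℕ) + 1 then ⟨(b : ℕ) + 1, by have := b.isLt; omega⟩
  else if h2 : (x : ℕ) < a then
    have hx : (x : ℕ) < m := by have := a.isLt; omega
    if (σ ⟨x, hx⟩ : ℕ) < b then ⟨σ ⟨x, hx⟩, by have := (σ ⟨x, hx⟩).isLt; omega⟩
    else ⟨(σ ⟨x, hx⟩ : ℕ) + 2, by have := (σ ⟨x, hx⟩).isLt; omega⟩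
  else
    have hx : (x : ℕ) - 2 < m := by have := x.isLt; omega
    if (σ ⟨(x : ℕ) - 2, hx⟩ : ℕ) < b then
      ⟨σ ⟨(x : ℕ) - 2, hx⟩, by have := (σ ⟨(x : ℕ) - 2, hx⟩).isLt; omega⟩
    else ⟨(σ ⟨(x : ℕ) - 2, hx⟩ : ℕ) + 2, by have := (σ ⟨(x : ℕ) - 2, hx⟩).isLt; omega⟩

lemma extFun_pos {k n : ℕ} (α : Fin k → Fin n) (i : ℕ) (h0 : i ≠ 0) (h1 : i ≤ k) :
    extFun α i = ((α ⟨i - 1, by omega⟩ : Fin n) : ℕ) + 1 := by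
  simp [extFun, h0, h1]

def insPts {m n : ℕ} (α : Fin m → Fin n) (a : Fin (m + 1)) (x y : Fin n) :
    Fin (m + 2) → Fin n := fun t =>
  if h : (t : ℕ) < a then α ⟨t, by have := a.isLt; omega⟩
  else if h1 : (t : ℕ) = a then x
  else if h2 : (t : ℕ) = (a : ℕ) + 1 then y
  else α ⟨(t : ℕ) - 2, by have := t.isLt; omega⟩

lemma insPts_strictMono {m n : ℕ} {α : Fin m → Fin n} {a : Fin (m + 1)} {x y : Fin n}
    (hα : StrictMono α) (hx1 : extFun α (a : ℕ) < (x : ℕ) + 1)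
    (hy2 : (y : ℕ) + 1 < extFun α ((a : ℕ) + 1)) (hxy : x < y) :
    StrictMono (insPts α a x y) := by
  rw [Fin.strictMono_iff_lt_succ]
  intro i
  have hi := i.isLt
  have ha := a.isLt
  simp only [insPts, Fin.coe_castSucc, Fin.val_succ]
  rcases lt_trichotomy ((i : ℕ) + 1) (a : ℕ) with h | h | h
  · rw [dif_pos (by omega), dif_pos h]
    exact hα (by simp [Fin.lt_def])
  · -- i + 1 = a : goal α ⟨i⟩ < x
    rw [dif_pos (by omega), dif_neg (by omega), dif_pos h]
    rw [extFun_pos α a (by omega) (by omega)] at hx1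
    have : α ⟨(a : ℕ) - 1, by omega⟩ < x := by
      rw [Fin.lt_def]; omega
    convert this using 3
    exacts [rfl, by omega]
  · rcases lt_trichotomy ((i : ℕ)) (a : ℕ) with h' | h' | h'
    · omega
    · -- i = a, i+1 = a+1 : goal x < y
      rw [dif_neg (by omega), dif_pos h', dif_neg (by omega), dif_neg (by omega),
        dif_pos (by omega)]
      exact hxy
    · rcases Nat.lt_or_ge ((i : ℕ)) ((a : ℕ) + 1) with h'' | h''
      · omega
      · rcases Nat.eq_or_lt_of_le h'' with h3 | h3
        · -- i = a + 1 : goal y < α ⟨a⟩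
          rw [dif_neg (by omega), dif_neg (by omega), dif_pos h3.symm,
            dif_neg (by omega), dif_neg (by omega), dif_neg (by omega)]
          rw [extFun_pos α ((a : ℕ) + 1) (by omega) (by omega)] at hy2
          have : y < α ⟨(a : ℕ) + 1 - 1, by omega⟩ := by
            rw [Fin.lt_def]; omega
          convert this using 3
          exacts [rfl, by omega]
        · -- i > a + 1
          rw [dif_neg (by omega), dif_neg (by omega), dif_neg (by omega),
            dif_neg (by omega), dif_neg (by omega), dif_neg (by omega)]
          exact hα (by simp only [Fin.lt_def]; omega)

lemma insPts_compat {m n : ℕ} (σ : Equiv.Perm (Fin m)) (a b : Fin (m + 1))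
    (ρ : Equiv.Perm (Fin n)) (α β : Fin m → Fin n)
    (hσ : ∀ i, ρ (α i) = β (σ i)) (x y : Fin n) (t : Fin (m + 2)) :
    ρ (insPts α a x y t) = insPts β b (ρ x) (ρ y) (insertAscent σ a b t) := by
  have hb := b.isLt
  have ht := t.isLt
  rcases lt_trichotomy ((t : ℕ)) (a : ℕ) with h | h | h
  · -- t < a
    have hm : (t : ℕ) < m := by have := a.isLt; omega
    have hL : insPts α a x y t = α ⟨t, hm⟩ := by simp only [insPts, dif_pos h]
    rw [hL, hσ]
    have hs := (σ ⟨t, hm⟩).isLt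
    by_cases hv : (σ ⟨t, hm⟩ : ℕ) < (b : ℕ)
    · have hins : insertAscent σ a b t = ⟨(σ ⟨t, hm⟩ : ℕ), by omega⟩ := by
        simp only [insertAscent, dif_neg (by omega : ¬ (t : ℕ) = (a : ℕ)),
          dif_neg (by omega : ¬ (t : ℕ) = (a : ℕ) + 1), dif_pos h, if_pos hv]
      rw [hins]
      simp only [insPts]
      rw [dif_pos hv]
    · have hins : insertAscent σ a b t = ⟨(σ ⟨t, hm⟩ : ℕ) + 2, by omega⟩ := by
        simp only [insertAscent, dif_neg (by omega : ¬ (t : ℕ) = (a : ℕ)),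
          dif_neg (by omega : ¬ (t : ℕ) = (a : ℕ) + 1), dif_pos h, if_neg hv]
      rw [hins]
      simp only [insPts]
      rw [dif_neg (by omega), dif_neg (by omega), dif_neg (by omega)]
      congr 1
  · -- t = a
    have hins : insertAscent σ a b t = ⟨(b : ℕ), by omega⟩ := by
      simp only [insertAscent, dif_pos h]
    rw [hins]
    simp only [insPts]
    rw [dif_neg (by omega : ¬ (t : ℕ) < (a : ℕ)), dif_pos h,
      dif_neg (by simp), dif_pos (by simp)]
  · rcases Nat.eq_or_lt_of_le h with h1 | h1
    · -- t = a + 1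
      have hins : insertAscent σ a b t = ⟨(b : ℕ) + 1, by omega⟩ := by
        simp only [insertAscent, dif_neg (by omega : ¬ (t : ℕ) = (a : ℕ)), dif_pos h1.symm]
      rw [hins]
      simp only [insPts]
      rw [dif_neg (by omega : ¬ (t : ℕ) < (a : ℕ)), dif_neg (by omega : ¬ (t : ℕ) = (a : ℕ)),
        dif_pos h1.symm, dif_neg (by simp), dif_neg (by simp), dif_pos (by simp)]
    · -- t > a + 1
      have hm : (t : ℕ) - 2 < m := by omega
      have hL : insPts α a x y t = α ⟨(t : ℕ) - 2, hm⟩ := by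
        simp only [insPts, dif_neg (by omega : ¬ (t : ℕ) < (a : ℕ)),
          dif_neg (by omega : ¬ (t : ℕ) = (a : ℕ)),
          dif_neg (by omega : ¬ (t : ℕ) = (a : ℕ) + 1)]
      rw [hL, hσ]
      have hs := (σ ⟨(t : ℕ) - 2, hm⟩).isLt
      by_cases hv : (σ ⟨(t : ℕ) - 2, hm⟩ : ℕ) < (b : ℕ)
      · have hins : insertAscent σ a b t = ⟨(σ ⟨(t : ℕ) - 2, hm⟩ : ℕ), by omega⟩ := by
          simp only [insertAscent, dif_neg (by omega : ¬ (t : ℕ) = (a : ℕ)),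
            dif_neg (by omega : ¬ (t : ℕ) = (a : ℕ) + 1),
            dif_neg (by omega : ¬ (t : ℕ) < (a : ℕ)), if_pos hv]
        rw [hins]
        simp only [insPts]
        rw [dif_pos hv]
      · have hins : insertAscent σ a b t = ⟨(σ ⟨(t : ℕ) - 2, hm⟩ : ℕ) + 2, by omega⟩ := by
          simp only [insertAscent, dif_neg (by omega : ¬ (t : ℕ) = (a : ℕ)),
            dif_neg (by omega : ¬ (t : ℕ) = (a : ℕ) + 1),
            dif_neg (by omega : ¬ (t : ℕ) < (a : ℕ)), if_neg hv]
        rw [hins]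
        simp only [insPts]
        rw [dif_neg (by omega), dif_neg (by omega), dif_neg (by omega)]
        congr 1

/-- If the pattern obtained by inserting an ascent into box `⟨a,b⟩` of the mesh
pattern `(σ, R)` contains the classical pattern `π`, then in any occurrence of
`(σ, R)` in a `π`-avoiding permutation `ρ`, the points of `ρ` in the region
corresponding to `⟨a,b⟩` form a decreasing subsequence. -/
theorem forced_decreasing_in_box {l m n : ℕ}
    (π : Equiv.Perm (Fin l)) (σ : Equiv.Perm (Fin m))
    (R : Finset (ℕ × ℕ)) (a b : Fin (m + 1))
    (hab : ((a : ℕ), (b : ℕ)) ∉ R)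
    (hcont : ContainsPat (⇑π) (insertAscent σ a b))
    (ρ : Equiv.Perm (Fin n)) (hρ : ¬ ContainsPat (⇑π) (⇑ρ))
    (α β : Fin m → Fin n) (hocc : MeshOcc σ R ρ α β) :
    ∀ x y : Fin n,
      (extFun α a < (x : ℕ) + 1 ∧ (x : ℕ) + 1 < extFun α ((a : ℕ) + 1) ∧
        extFun β b < (ρ x : ℕ) + 1 ∧ (ρ x : ℕ) + 1 < extFun β ((b : ℕ) + 1)) →
      (extFun α a < (y : ℕ) + 1 ∧ (y : ℕ) + 1 < extFun α ((a : ℕ) + 1) ∧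
        extFun β b < (ρ y : ℕ) + 1 ∧ (ρ y : ℕ) + 1 < extFun β ((b : ℕ) + 1)) →
      x < y → ρ y < ρ x := by
  intro x y hx hy hxy
  by_contra hcon
  have hxyv : ρ x < ρ y := by
    rcases lt_or_ge (ρ y) (ρ x) with h | h
    · exact absurd h hcon
    · exact lt_of_le_of_ne h (fun he => (ne_of_lt hxy) (ρ.injective he.symm).symm)
  obtain ⟨hα, hβ, hσ, _⟩ := hocc
  obtain ⟨γ, hγmono, hγ⟩ := hcont
  apply hρ
  have hA : StrictMono (insPts α a x y) := insPts_strictMono hα hx.1 hy.2.1 hxy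
  have hB : StrictMono (insPts β b (ρ x) (ρ y)) :=
    insPts_strictMono hβ hx.2.2.1 hy.2.2.2 hxyv
  refine ⟨fun i => insPts α a x y (γ i), hA.comp hγmono, fun i j => ?_⟩
  rw [hγ i j]
  simp only [Function.comp]
  rw [insPts_compat σ a b ρ α β hσ, insPts_compat σ a b ρ α β hσ]
  exact hB.lt_iff_lt.symm
end

section
/- The number of permutations of length n avoiding both 231 and the mesh pattern (1, {⟨0,1⟩,⟨1,0⟩}) is the n-th Fine number; its generating function F(x) satisfies F(x) = 1 + x·F(x)·(C(x) − 1), where C(x) = 1 + x·C(x)² is the Catalan generating function. The sequence begins 1, 0, 1, 2, 6, 18, 57, 186, 622, … . -/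
/-- The number of permutations of length `n` avoiding 231 and the mesh pattern
`(1, {⟨0,1⟩,⟨1,0⟩})`. -/
noncomputable def fineCount (n : ℕ) : ℕ :=
  Nat.card {π : Equiv.Perm (Fin n) // Avoids231 π ∧
    AvoidsMesh (1 : Equiv.Perm (Fin 1)) ({(0,1),(1,0)} : Finset (ℕ × ℕ)) π}

open Equiv Finset

def HasSplit {n : ℕ} (π : Equiv.Perm (Fin n)) : Prop :=
  ∃ m : Fin n, (∀ i, i < m → π i < π m) ∧ (∀ i, m < i → π m < π i)

lemma extFun_zero {k n : ℕ} (α : Fin k → Fin n) : extFun α 0 = 0 := by simp [extFun]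

lemma extFun_one {n : ℕ} (α : Fin 1 → Fin n) : extFun α 1 = (α 0 : ℕ) + 1 := by
  simp [extFun]

lemma extFun_two {n : ℕ} (α : Fin 1 → Fin n) : extFun α 2 = n + 1 := by
  norm_num [extFun]

lemma containsMesh_iff {n : ℕ} (π : Equiv.Perm (Fin n)) :
    ContainsMesh (1 : Equiv.Perm (Fin 1)) ({(0,1),(1,0)} : Finset (ℕ × ℕ)) π ↔ HasSplit π := by
  constructor
  · rintro ⟨α, β, -, -, hval, hreg⟩
    have hv : π (α 0) = β 0 := hval 0
    refine ⟨α 0, ?_, ?_⟩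
    · intro i hi
      have h1 := hreg (0,1) (by simp) i
      simp only [zero_add, Nat.reduceAdd, extFun_zero, extFun_one, extFun_two] at h1
      have hne : (π i : ℕ) ≠ (π (α 0) : ℕ) := fun h =>
        (ne_of_lt hi) (π.injective (Fin.val_injective h))
      have hlt : (i : ℕ) < (α 0 : ℕ) := hi
      have hb : (π i : ℕ) < n := (π i).isLt
      rw [Fin.lt_def]
      rw [hv] at hne ⊢
      omega
    · intro i hi
      have h1 := hreg (1,0) (by simp) i
      simp only [zero_add, Nat.reduceAdd, extFun_zero, extFun_one, extFun_two] at h1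
      have hne : (π (α 0) : ℕ) ≠ (π i : ℕ) := fun h =>
        (ne_of_lt hi) (π.injective (Fin.val_injective h))
      have hlt : (α 0 : ℕ) < (i : ℕ) := hi
      have hb : (i : ℕ) < n := i.isLt
      rw [Fin.lt_def]
      rw [hv] at hne ⊢
      omega
  · rintro ⟨m, h1, h2⟩
    refine ⟨fun _ => m, fun _ => π m, Subsingleton.strictMono _, Subsingleton.strictMono _,
      fun i => rfl, ?_⟩
    intro p hp x
    simp only [Finset.mem_insert, Finset.mem_singleton] at hp
    rcases hp with rfl | rfl
    · simp only [zero_add, Nat.reduceAdd, extFun_zero, extFun_one, extFun_two]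
      rintro ⟨c1, c2, c3, c4⟩
      have hx : (x : ℕ) < (m : ℕ) := by omega
      have := h1 x (by rwa [Fin.lt_def])
      rw [Fin.lt_def] at this
      omega
    · simp only [zero_add, Nat.reduceAdd, extFun_zero, extFun_one, extFun_two]
      rintro ⟨c1, c2, c3, c4⟩
      have hx : (m : ℕ) < (x : ℕ) := by omega
      have := h2 x (by rwa [Fin.lt_def])
      rw [Fin.lt_def] at this
      omega

def joinFun (n a : ℕ) (ha : a ≤ n) (σ : Equiv.Perm (Fin a)) (τ : Equiv.Perm (Fin (n - a)))
    (i : Fin (n + 1)) : Fin (n + 1) :=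
  if h : (i : ℕ) < a then ⟨σ ⟨i, h⟩, by have := (σ ⟨i, h⟩).isLt; omega⟩
  else if h2 : (i : ℕ) = a then ⟨n, by omega⟩
  else ⟨a + τ ⟨(i : ℕ) - a - 1, by have := i.isLt; omega⟩, by
    have := (τ ⟨(i : ℕ) - a - 1, by have := i.isLt; omega⟩).isLt; omega⟩

def posA (N A : ℕ) (hA : A ≤ N) (x : Fin A) : Fin (N+1) := ⟨(x : ℕ), by have := x.isLt; omega⟩

def posB (N A : ℕ) (hA : A ≤ N) (y : Fin (N - A)) : Fin (N+1) :=
  ⟨A + 1 + (y : ℕ), by have := y.isLt; omega⟩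

variable {n a : ℕ} {ha : a ≤ n} {σ : Equiv.Perm (Fin a)} {τ : Equiv.Perm (Fin (n - a))}

lemma joinFun_val_lt {i : Fin (n+1)} (h : (i : ℕ) < a) :
    (joinFun n a ha σ τ i : ℕ) = σ ⟨i, h⟩ := by simp [joinFun, h]

lemma joinFun_val_eq {i : Fin (n+1)} (h : (i : ℕ) = a) :
    (joinFun n a ha σ τ i : ℕ) = n := by simp [joinFun, h]

lemma joinFun_val_gt {i : Fin (n+1)} (h : a < (i : ℕ)) :
    (joinFun n a ha σ τ i : ℕ) =
      a + τ ⟨(i : ℕ) - a - 1, by have := i.isLt; omega⟩ := by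
  simp [joinFun, Nat.not_lt.mpr h.le, (Nat.ne_of_gt h)]

lemma joinFun_injective : Function.Injective (joinFun n a ha σ τ) := by
  intro i j hij
  have hv : (joinFun n a ha σ τ i : ℕ) = (joinFun n a ha σ τ j : ℕ) := congrArg Fin.val hij
  have hi' := i.isLt
  have hj' := j.isLt
  rcases lt_trichotomy (i : ℕ) a with hi | hi | hi <;>
    rcases lt_trichotomy (j : ℕ) a with hj | hj | hj
  · rw [joinFun_val_lt hi, joinFun_val_lt hj] at hv
    have h2 := σ.injective (Fin.val_injective hv)
    exact Fin.ext (Fin.mk.inj h2)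
  · rw [joinFun_val_lt hi, joinFun_val_eq hj] at hv
    have := (σ ⟨i, hi⟩).isLt; omega
  · rw [joinFun_val_lt hi, joinFun_val_gt hj] at hv
    have := (σ ⟨i, hi⟩).isLt; omega
  · rw [joinFun_val_eq hi, joinFun_val_lt hj] at hv
    have := (σ ⟨j, hj⟩).isLt; omega
  · exact Fin.ext (by omega)
  · rw [joinFun_val_eq hi, joinFun_val_gt hj] at hv
    have := (τ ⟨(j : ℕ) - a - 1, by omega⟩).isLt; omega
  · rw [joinFun_val_gt hi, joinFun_val_lt hj] at hv
    have := (σ ⟨j, hj⟩).isLt; omega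
  · rw [joinFun_val_gt hi, joinFun_val_eq hj] at hv
    have := (τ ⟨(i : ℕ) - a - 1, by omega⟩).isLt; omega
  · rw [joinFun_val_gt hi, joinFun_val_gt hj] at hv
    have h2 : τ ⟨(i : ℕ) - a - 1, by omega⟩ = τ ⟨(j : ℕ) - a - 1, by omega⟩ :=
      Fin.val_injective (by omega)
    have h3 : ((i : ℕ) - a - 1 : ℕ) = (j : ℕ) - a - 1 := congrArg Fin.val (τ.injective h2)
    exact Fin.ext (by omega)

noncomputable def joinPerm (n a : ℕ) (ha : a ≤ n) (σ : Equiv.Perm (Fin a)) (τ : Equiv.Perm (Fin (n - a))) :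
    Equiv.Perm (Fin (n + 1)) :=
  Equiv.ofBijective _ (Finite.injective_iff_bijective.mp (joinFun_injective (ha := ha) (σ := σ) (τ := τ)))

lemma joinPerm_apply (i : Fin (n + 1)) : joinPerm n a ha σ τ i = joinFun n a ha σ τ i := rfl

lemma joinPerm_val_lt {i : Fin (n+1)} (h : (i : ℕ) < a) :
    (joinPerm n a ha σ τ i : ℕ) = σ ⟨i, h⟩ := joinFun_val_lt (ha := ha) h

lemma joinPerm_val_eq {i : Fin (n+1)} (h : (i : ℕ) = a) :
    (joinPerm n a ha σ τ i : ℕ) = n := joinFun_val_eq (ha := ha) h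

lemma joinPerm_val_gt {i : Fin (n+1)} (h : a < (i : ℕ)) :
    (joinPerm n a ha σ τ i : ℕ) =
      a + τ ⟨(i : ℕ) - a - 1, by have := i.isLt; omega⟩ := joinFun_val_gt (ha := ha) h

lemma joinPerm_val_gt' {x : Fin (n - a)} :
    (joinPerm n a ha σ τ ⟨a + 1 + (x : ℕ), by have := x.isLt; omega⟩ : ℕ) = a + τ x := by
  rw [joinPerm_val_gt (by simp; omega)]
  exact congrArg (fun y => a + ((τ y : Fin (n-a)) : ℕ)) (Fin.ext (by simp; omega))

lemma avoids231_joinPerm_iff :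
    Avoids231 (joinPerm n a ha σ τ) ↔ Avoids231 σ ∧ Avoids231 τ := by
  unfold Avoids231
  rw [← not_or, not_iff_not]
  constructor
  · rintro ⟨i, j, k, hij, hjk, h1, h2⟩
    rw [Fin.lt_def] at hij hjk h1 h2
    have hin := i.isLt
    have hjn := j.isLt
    have hkn := k.isLt
    rcases lt_trichotomy (k : ℕ) a with hk | hk | hk
    · have hj : (j : ℕ) < a := by omega
      have hi : (i : ℕ) < a := by omega
      rw [joinPerm_val_lt hi, joinPerm_val_lt hk] at h1
      rw [joinPerm_val_lt hi, joinPerm_val_lt hj] at h2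
      exact Or.inl ⟨⟨i, hi⟩, ⟨j, hj⟩, ⟨k, hk⟩, Fin.mk_lt_mk.mpr hij, Fin.mk_lt_mk.mpr hjk, h1, h2⟩
    · rw [joinPerm_val_eq hk] at h1
      have := (joinPerm n a ha σ τ i).isLt
      omega
    · rcases lt_trichotomy (i : ℕ) a with hi | hi | hi
      · rw [joinPerm_val_lt hi, joinPerm_val_gt hk] at h1
        have := (σ ⟨i, hi⟩).isLt
        omega
      · rw [joinPerm_val_eq hi] at h2
        have := (joinPerm n a ha σ τ j).isLt
        omega
      · have hj : a < (j : ℕ) := by omega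
        rw [joinPerm_val_gt hi, joinPerm_val_gt hk] at h1
        rw [joinPerm_val_gt hi, joinPerm_val_gt hj] at h2
        exact Or.inr ⟨⟨(i : ℕ) - a - 1, by omega⟩, ⟨(j : ℕ) - a - 1, by omega⟩,
          ⟨(k : ℕ) - a - 1, by omega⟩, Fin.mk_lt_mk.mpr (by omega),
          Fin.mk_lt_mk.mpr (by omega), Nat.lt_of_add_lt_add_left h1, Nat.lt_of_add_lt_add_left h2⟩
  · rintro (⟨i, j, k, hij, hjk, h1, h2⟩ | ⟨i, j, k, hij, hjk, h1, h2⟩)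
    · have hin := i.isLt
      have hjn := j.isLt
      have hkn := k.isLt
      have hij' : (i : ℕ) < (j : ℕ) := hij
      have hjk' : (j : ℕ) < (k : ℕ) := hjk
      refine ⟨⟨i, by omega⟩, ⟨j, by omega⟩, ⟨k, by omega⟩, Fin.mk_lt_mk.mpr hij',
        Fin.mk_lt_mk.mpr hjk', ?_, ?_⟩
      · show (joinPerm n a ha σ τ ⟨(k:ℕ), _⟩ : ℕ) < (joinPerm n a ha σ τ ⟨(i:ℕ), _⟩ : ℕ)
        rw [joinPerm_val_lt (show ((⟨(k:ℕ), by omega⟩ : Fin (n+1)) : ℕ) < a from hkn),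
          joinPerm_val_lt (show ((⟨(i:ℕ), by omega⟩ : Fin (n+1)) : ℕ) < a from hin)]
        exact h1
      · show (joinPerm n a ha σ τ ⟨(i:ℕ), _⟩ : ℕ) < (joinPerm n a ha σ τ ⟨(j:ℕ), _⟩ : ℕ)
        rw [joinPerm_val_lt (show ((⟨(i:ℕ), by omega⟩ : Fin (n+1)) : ℕ) < a from hin),
          joinPerm_val_lt (show ((⟨(j:ℕ), by omega⟩ : Fin (n+1)) : ℕ) < a from hjn)]
        exact h2
    · have hin := i.isLt
      have hjn := j.isLt
      have hkn := k.isLt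
      have hij' : (i : ℕ) < (j : ℕ) := hij
      have hjk' : (j : ℕ) < (k : ℕ) := hjk
      have h1' : (τ k : ℕ) < (τ i : ℕ) := h1
      have h2' : (τ i : ℕ) < (τ j : ℕ) := h2
      refine ⟨⟨a + 1 + (i : ℕ), by omega⟩, ⟨a + 1 + (j : ℕ), by omega⟩,
        ⟨a + 1 + (k : ℕ), by omega⟩, Fin.mk_lt_mk.mpr (by omega),
        Fin.mk_lt_mk.mpr (by omega), ?_, ?_⟩
      · show (joinPerm n a ha σ τ _ : ℕ) < (joinPerm n a ha σ τ _ : ℕ)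
        rw [joinPerm_val_gt' (x := k), joinPerm_val_gt' (x := i)]
        omega
      · show (joinPerm n a ha σ τ _ : ℕ) < (joinPerm n a ha σ τ _ : ℕ)
        rw [joinPerm_val_gt' (x := i), joinPerm_val_gt' (x := j)]
        omega

lemma joinPerm_val_lt' {x : Fin a} :
    (joinPerm n a ha σ τ ⟨(x : ℕ), by have := x.isLt; omega⟩ : ℕ) = σ x := by
  rw [joinPerm_val_lt (show ((⟨(x : ℕ), by have := x.isLt; omega⟩ : Fin (n+1)) : ℕ) < a from x.isLt)]

lemma joinPerm_val_eq' :
    (joinPerm n a ha σ τ ⟨a, by omega⟩ : ℕ) = n := joinPerm_val_eq rfl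

lemma hasSplit_joinPerm_iff :
    HasSplit (joinPerm n a ha σ τ) ↔ HasSplit σ ∨ a = n := by
  constructor
  · rintro ⟨m, h1, h2⟩
    have hmn := m.isLt
    rcases lt_trichotomy (m : ℕ) a with hm | hm | hm
    · left
      refine ⟨⟨(m : ℕ), hm⟩, ?_, ?_⟩
      · intro x hx
        have hx' : (x : ℕ) < (m : ℕ) := hx
        have h := h1 ⟨(x : ℕ), by have := x.isLt; omega⟩
          (show _ < m from Fin.lt_def.mpr (by exact hx'))
        rw [Fin.lt_def, joinPerm_val_lt', joinPerm_val_lt hm] at h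
        exact h
      · intro x hx
        have hx' : (m : ℕ) < (x : ℕ) := hx
        have h := h2 ⟨(x : ℕ), by have := x.isLt; omega⟩
          (show m < _ from Fin.lt_def.mpr (by exact hx'))
        rw [Fin.lt_def, joinPerm_val_lt', joinPerm_val_lt hm] at h
        exact h
    · right
      by_contra hne
      have han : a < n := lt_of_le_of_ne ha hne
      have h := h2 ⟨a + 1 + ((⟨0, by omega⟩ : Fin (n - a)) : ℕ), by omega⟩
        (show m < _ from Fin.lt_def.mpr (by simp; omega))
      rw [Fin.lt_def, joinPerm_val_gt', joinPerm_val_eq hm] at h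
      have := (τ ⟨0, by omega⟩).isLt
      omega
    · have h := h1 ⟨a, by omega⟩ (show _ < m from Fin.lt_def.mpr (by exact hm))
      rw [Fin.lt_def, joinPerm_val_eq'] at h
      have := (joinPerm n a ha σ τ m).isLt
      omega
  · rintro (⟨m, hs1, hs2⟩ | rfl)
    · have hma := m.isLt
      refine ⟨⟨(m : ℕ), by omega⟩, ?_, ?_⟩
      · intro i hi
        have hi' : (i : ℕ) < (m : ℕ) := hi
        have hia : (i : ℕ) < a := by omega
        rw [Fin.lt_def, joinPerm_val_lt hia,
          joinPerm_val_lt (show ((⟨(m : ℕ), by omega⟩ : Fin (n+1)) : ℕ) < a from hma)]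
        exact hs1 ⟨(i : ℕ), hia⟩ (show _ < m from Fin.lt_def.mpr (by exact hi'))
      · intro i hi
        have hi' : (m : ℕ) < (i : ℕ) := hi
        have hin := i.isLt
        rw [Fin.lt_def,
          joinPerm_val_lt (show ((⟨(m : ℕ), by omega⟩ : Fin (n+1)) : ℕ) < a from hma)]
        rcases lt_trichotomy (i : ℕ) a with hia | hia | hia
        · rw [joinPerm_val_lt hia]
          exact hs2 ⟨(i : ℕ), hia⟩ (show m < _ from Fin.lt_def.mpr (by exact hi'))
        · rw [joinPerm_val_eq hia]
          exact lt_of_lt_of_le (Fin.isLt _) ha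
        · rw [joinPerm_val_gt hia]
          exact lt_of_lt_of_le (Fin.isLt _) (Nat.le_add_right a _)
    · refine ⟨⟨a, by omega⟩, ?_, ?_⟩
      · intro i hi
        have hi' : (i : ℕ) < a := hi
        rw [Fin.lt_def, joinPerm_val_lt hi', joinPerm_val_eq']
        exact lt_of_lt_of_le (Fin.isLt _) le_rfl
      · intro i hi
        have hi' : a < (i : ℕ) := hi
        have := i.isLt
        omega

lemma joinPerm_val_posA (x : Fin a) :
    (joinPerm n a ha σ τ (posA n a ha x) : ℕ) = σ x := joinPerm_val_lt'

lemma joinPerm_val_posB (y : Fin (n - a)) :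
    (joinPerm n a ha σ τ (posB n a ha y) : ℕ) = a + τ y := joinPerm_val_gt'

set_option maxHeartbeats 1000000 in
lemma exists_decomp {n : ℕ} (π : Equiv.Perm (Fin (n+1))) (hav : Avoids231 π) :
    ∃ (a : ℕ) (ha : a ≤ n) (σ : Equiv.Perm (Fin a)) (τ : Equiv.Perm (Fin (n - a))),
      π = joinPerm n a ha σ τ := by
  set M : Fin (n+1) := π.symm ⟨n, by omega⟩ with hM
  have hMtop : π M = ⟨n, by omega⟩ := π.apply_symm_apply _
  have hMle : (M : ℕ) ≤ n := by have := M.isLt; omega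
  have hvn : ∀ i : Fin (n+1), i ≠ M → (π i : ℕ) < n := by
    intro i hi
    have h1 := (π i).isLt
    have h2 : (π i : ℕ) ≠ n := by
      intro h'
      exact hi (π.injective (by rw [hMtop]; exact Fin.ext h'))
    omega
  have key2 : ∀ i k : Fin (n+1), (i : ℕ) < (M : ℕ) → (M : ℕ) < (k : ℕ) →
      (π i : ℕ) < (π k : ℕ) := by
    intro i k hi hk
    by_contra h
    push_neg at h
    have hne : (π k : ℕ) ≠ (π i : ℕ) := fun h' => by
      have := congrArg Fin.val (π.injective (Fin.ext h'))
      omega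
    have hlt : (π k : ℕ) < (π i : ℕ) := lt_of_le_of_ne h hne
    have hiM : (π i : ℕ) < n := hvn i (fun h' => by rw [h'] at hi; omega)
    refine hav ⟨i, M, k, Fin.lt_def.mpr hi, Fin.lt_def.mpr hk, Fin.lt_def.mpr hlt,
      Fin.lt_def.mpr ?_⟩
    rw [hMtop]
    exact hiM
  have hlow : ∀ i : Fin (n+1), (i : ℕ) < (M : ℕ) → (π i : ℕ) < (M : ℕ) := by
    intro i hi
    by_contra hge
    push_neg at hge
    have hiM : i ≠ M := fun h' => by rw [h'] at hi; omega
    have hsub : insert (π M) ((Finset.Ioi M).image π) ⊆ Finset.Ioi (π i) := by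
      intro v hv
      rcases Finset.mem_insert.mp hv with rfl | hv
      · rw [Finset.mem_Ioi, Fin.lt_def, hMtop]
        exact hvn i hiM
      · obtain ⟨k, hk, rfl⟩ := Finset.mem_image.mp hv
        rw [Finset.mem_Ioi] at hk ⊢
        exact Fin.lt_def.mpr (key2 i k hi (Fin.lt_def.mp hk))
    have hnotmem : π M ∉ (Finset.Ioi M).image π := by
      intro hmem
      obtain ⟨k, hk, heq⟩ := Finset.mem_image.mp hmem
      rw [π.injective heq] at hk
      exact absurd (Finset.mem_Ioi.mp hk) (lt_irrefl _)
    have hc := Finset.card_le_card hsub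
    rw [Finset.card_insert_of_notMem hnotmem,
      Finset.card_image_of_injective _ π.injective, Fin.card_Ioi, Fin.card_Ioi] at hc
    have := (π i).isLt
    omega
  have hhigh : ∀ k : Fin (n+1), (M : ℕ) < (k : ℕ) → (M : ℕ) ≤ (π k : ℕ) := by
    intro k hk
    by_contra hlt
    push_neg at hlt
    have hsub : (Finset.Iio M).image π ⊆ Finset.Iio M := by
      intro v hv
      obtain ⟨i, hi, rfl⟩ := Finset.mem_image.mp hv
      rw [Finset.mem_Iio] at hi ⊢
      exact Fin.lt_def.mpr (hlow i (Fin.lt_def.mp hi))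
    have hceq : (Finset.Iio M).image π = Finset.Iio M := by
      apply Finset.eq_of_subset_of_card_le hsub
      rw [Finset.card_image_of_injective _ π.injective]
    have hmem : π k ∈ Finset.Iio M := Finset.mem_Iio.mpr (Fin.lt_def.mpr hlt)
    rw [← hceq] at hmem
    obtain ⟨i, hi, heq⟩ := Finset.mem_image.mp hmem
    rw [π.injective heq] at hi
    rw [Finset.mem_Iio, Fin.lt_def] at hi
    omega
  have ha : (M : ℕ) ≤ n := hMle
  set g : Fin (M : ℕ) → Fin (M : ℕ) :=
    fun x => ⟨(π (posA n (M : ℕ) ha x) : ℕ), hlow _ x.isLt⟩ with hg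
  have ginj : Function.Injective g := by
    intro x y h
    have h1 : (π (posA n (M : ℕ) ha x) : ℕ) = (π (posA n (M : ℕ) ha y) : ℕ) := Fin.mk.inj h
    have h2 := congrArg Fin.val (π.injective (Fin.ext h1))
    exact Fin.ext h2
  set t : Fin (n - (M : ℕ)) → Fin (n - (M : ℕ)) :=
    fun y => ⟨(π (posB n (M : ℕ) ha y) : ℕ) - (M : ℕ), by
      have h1 := hvn (posB n (M : ℕ) ha y) (fun h' => by
        have := congrArg Fin.val h'
        simp [posB] at this
        omega)
      have h2 := hhigh (posB n (M : ℕ) ha y) (by simp [posB]; omega)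
      omega⟩ with ht
  have tinj : Function.Injective t := by
    intro x y h
    have h1 : (π (posB n (M : ℕ) ha x) : ℕ) - (M : ℕ) = (π (posB n (M : ℕ) ha y) : ℕ) - (M : ℕ) := Fin.mk.inj h
    have hx := hhigh (posB n (M : ℕ) ha x) (by simp [posB]; omega)
    have hy := hhigh (posB n (M : ℕ) ha y) (by simp [posB]; omega)
    have h2 := congrArg Fin.val (π.injective (Fin.ext (show (π (posB n (M : ℕ) ha x) : ℕ) =
      (π (posB n (M : ℕ) ha y) : ℕ) by omega)))
    simp [posB] at h2
    exact Fin.ext (by omega)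
  refine ⟨(M : ℕ), ha, Equiv.ofBijective g (Finite.injective_iff_bijective.mp ginj),
    Equiv.ofBijective t (Finite.injective_iff_bijective.mp tinj), ?_⟩
  apply Equiv.ext
  intro i
  apply Fin.ext
  have hin := i.isLt
  rcases lt_trichotomy (i : ℕ) (M : ℕ) with hi | hi | hi
  · have hip : i = posA n (M : ℕ) ha ⟨(i : ℕ), hi⟩ := Fin.ext rfl
    rw [hip, joinPerm_val_posA]
    rfl
  · have hip : i = M := Fin.ext (by
      have : ((π.symm ⟨n, by omega⟩ : Fin (n+1)) : ℕ) = (M : ℕ) := rfl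
      omega)
    rw [hip, joinPerm_val_eq rfl, hMtop]
  · have hib : i = posB n (M : ℕ) ha ⟨(i : ℕ) - (M : ℕ) - 1, by omega⟩ := Fin.ext (by simp [posB]; omega)
    rw [hib, joinPerm_val_posB]
    have hτ : ((Equiv.ofBijective t (Finite.injective_iff_bijective.mp tinj))
        (⟨(i : ℕ) - (M : ℕ) - 1, by omega⟩ : Fin (n - (M : ℕ))) : ℕ) =
        (π (posB n (M : ℕ) ha ⟨(i : ℕ) - (M : ℕ) - 1, by omega⟩) : ℕ) - (M : ℕ) := rfl
    rw [hτ]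
    have h2 := hhigh (posB n (M : ℕ) ha ⟨(i : ℕ) - (M : ℕ) - 1, by omega⟩) (by simp [posB]; omega)
    omega

lemma joinPerm_val_lt_bound {i : Fin (n+1)} (h : (i : ℕ) < a) :
    (joinPerm n a ha σ τ i : ℕ) < a := by
  rw [joinPerm_val_lt h]; exact Fin.isLt _

lemma joinPerm_val_gt_lb {i : Fin (n+1)} (h : a < (i : ℕ)) :
    a ≤ (joinPerm n a ha σ τ i : ℕ) := by
  rw [joinPerm_val_gt h]; exact Nat.le_add_right _ _

lemma joinPerm_val_gt_ub {i : Fin (n+1)} (h : a < (i : ℕ)) :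
    (joinPerm n a ha σ τ i : ℕ) < n := by
  rw [joinPerm_val_gt h]
  exact lt_of_lt_of_le (Nat.add_lt_add_left (Fin.isLt _) a) (by omega)

lemma joinPerm_a_eq {a' : ℕ} (ha' : a' ≤ n) (σ' : Equiv.Perm (Fin a'))
    (τ' : Equiv.Perm (Fin (n - a')))
    (h : joinPerm n a ha σ τ = joinPerm n a' ha' σ' τ') : a = a' := by
  by_contra hne
  set p : Fin (n+1) := ⟨a, by omega⟩ with hp
  have hv : (joinPerm n a ha σ τ p : ℕ) = (joinPerm n a' ha' σ' τ' p : ℕ) := by rw [h]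
  rw [joinPerm_val_eq (show (p : ℕ) = a from rfl)] at hv
  rcases lt_or_gt_of_ne hne with hlt | hgt
  · have hb := joinPerm_val_lt_bound (ha := ha') (σ := σ') (τ := τ') (i := p) hlt
    omega
  · have hb := joinPerm_val_gt_ub (ha := ha') (σ := σ') (τ := τ') (i := p) hgt
    omega

lemma joinPerm_components_eq (σ' : Equiv.Perm (Fin a)) (τ' : Equiv.Perm (Fin (n - a)))
    (h : joinPerm n a ha σ τ = joinPerm n a ha σ' τ') : σ = σ' ∧ τ = τ' := by
  constructor
  · apply Equiv.ext
    intro x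
    apply Fin.ext
    have hv : (joinPerm n a ha σ τ (posA n a ha x) : ℕ) =
        (joinPerm n a ha σ' τ' (posA n a ha x) : ℕ) := by rw [h]
    rwa [joinPerm_val_posA, joinPerm_val_posA] at hv
  · apply Equiv.ext
    intro y
    apply Fin.ext
    have hv : (joinPerm n a ha σ τ (posB n a ha y) : ℕ) =
        (joinPerm n a ha σ' τ' (posB n a ha y) : ℕ) := by rw [h]
    rw [joinPerm_val_posB, joinPerm_val_posB] at hv
    omega

lemma nat_card_sigma {m : ℕ} (G : Fin m → Type*) [∀ x, Finite (G x)] :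
    Nat.card (Σ x, G x) = ∑ x, Nat.card (G x) := by
  letI : ∀ x, Fintype (G x) := fun x => Fintype.ofFinite _
  simp [Nat.card_eq_fintype_card]

noncomputable def avCount (m : ℕ) : ℕ := Nat.card {π : Equiv.Perm (Fin m) // Avoids231 π}

lemma avoids231_of_zero {m : ℕ} (hm : m = 0) (π : Equiv.Perm (Fin m)) : Avoids231 π := by
  rintro ⟨i, -⟩
  subst hm
  exact i.elim0

lemma avCount_zero : avCount 0 = 1 := by
  rw [avCount]
  have : Unique {π : Equiv.Perm (Fin 0) // Avoids231 π} :=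
    ⟨⟨⟨1, avoids231_of_zero rfl 1⟩⟩, fun x => Subtype.ext (Equiv.ext fun i => i.elim0)⟩
  exact Nat.card_unique

lemma avCount_succ (n : ℕ) :
    avCount (n + 1) = ∑ x : Fin (n + 1), avCount x * avCount (n - x) := by
  classical
  let Ψ : (Σ x : Fin (n+1), {σ : Equiv.Perm (Fin (x : ℕ)) // Avoids231 σ} ×
      {τ : Equiv.Perm (Fin (n - (x : ℕ))) // Avoids231 τ}) →
      {π : Equiv.Perm (Fin (n+1)) // Avoids231 π} := fun q =>
    ⟨joinPerm n (q.1 : ℕ) q.1.is_le q.2.1.1 q.2.2.1,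
      (avoids231_joinPerm_iff).mpr ⟨q.2.1.2, q.2.2.2⟩⟩
  have hbij : Function.Bijective Ψ := by
    constructor
    · rintro ⟨x, ⟨σ₁, hσ⟩, ⟨τ₁, hτ⟩⟩ ⟨x', ⟨σ₂, hσ'⟩, ⟨τ₂, hτ'⟩⟩ hEq
      have h := congrArg Subtype.val hEq
      simp only [Ψ] at h
      have hx2 : x = x' := Fin.ext (joinPerm_a_eq x'.is_le σ₂ τ₂ h)
      subst hx2
      obtain ⟨h1, h2⟩ := joinPerm_components_eq σ₂ τ₂ h
      subst h1; subst h2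
      rfl
    · rintro ⟨π, hπ⟩
      obtain ⟨b, hb, σ₁, τ₁, hdec⟩ := exists_decomp π hπ
      have hσt := (avoids231_joinPerm_iff (ha := hb)).mp (hdec ▸ hπ)
      refine ⟨⟨⟨b, by omega⟩, ⟨σ₁, hσt.1⟩, ⟨τ₁, hσt.2⟩⟩, ?_⟩
      exact Subtype.ext hdec.symm
  have hcard := Nat.card_eq_of_bijective Ψ hbij
  rw [avCount, ← hcard, nat_card_sigma]
  refine Finset.sum_congr rfl fun x _ => ?_
  rw [Nat.card_prod]
  rfl

lemma avCount_eq_catalan : ∀ m : ℕ, avCount m = catalan m := by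
  intro m
  induction m using Nat.strong_induction_on with
  | _ m ih =>
    match m with
    | 0 => exact avCount_zero.trans catalan_zero.symm
    | n + 1 =>
      rw [avCount_succ, catalan_succ]
      refine Finset.sum_congr rfl fun x _ => ?_
      rw [ih x (by have := x.isLt; omega), ih (n - x) (by have := x.isLt; omega)]

lemma fineCount_eq_card (m : ℕ) :
    fineCount m = Nat.card {π : Equiv.Perm (Fin m) // Avoids231 π ∧ ¬ HasSplit π} := by
  apply Nat.card_congr
  apply Equiv.subtypeEquivRight
  intro π
  exact and_congr_right fun _ => not_congr (containsMesh_iff π)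

lemma fineCount_zero' : fineCount 0 = 1 := by
  rw [fineCount_eq_card]
  have : Unique {π : Equiv.Perm (Fin 0) // Avoids231 π ∧ ¬ HasSplit π} :=
    ⟨⟨⟨1, avoids231_of_zero rfl 1, by rintro ⟨m, -⟩; exact m.elim0⟩⟩,
      fun x => Subtype.ext (Equiv.ext fun i => i.elim0)⟩
  exact Nat.card_unique

lemma fineCount_succ (n : ℕ) :
    fineCount (n + 1) = ∑ x : Fin n, fineCount x * avCount (n - x) := by
  classical
  let Ψ : (Σ x : Fin n, {σ : Equiv.Perm (Fin (x : ℕ)) // Avoids231 σ ∧ ¬ HasSplit σ} ×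
      {τ : Equiv.Perm (Fin (n - (x : ℕ))) // Avoids231 τ}) →
      {π : Equiv.Perm (Fin (n+1)) // Avoids231 π ∧ ¬ HasSplit π} := fun q =>
    ⟨joinPerm n (q.1 : ℕ) (le_of_lt q.1.isLt) q.2.1.1 q.2.2.1,
      (avoids231_joinPerm_iff).mpr ⟨q.2.1.2.1, q.2.2.2⟩, by
        intro hs
        rcases (hasSplit_joinPerm_iff).mp hs with hs' | hs'
        · exact q.2.1.2.2 hs'
        · have := q.1.isLt; omega⟩
  have hbij : Function.Bijective Ψ := by
    constructor
    · rintro ⟨x, ⟨σ₁, hσ⟩, ⟨τ₁, hτ⟩⟩ ⟨x', ⟨σ₂, hσ'⟩, ⟨τ₂, hτ'⟩⟩ hEq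
      have h := congrArg Subtype.val hEq
      simp only [Ψ] at h
      have hx2 : x = x' := Fin.ext (joinPerm_a_eq (le_of_lt x'.isLt) σ₂ τ₂ h)
      subst hx2
      obtain ⟨h1, h2⟩ := joinPerm_components_eq σ₂ τ₂ h
      subst h1; subst h2
      rfl
    · rintro ⟨π, hπ, hns⟩
      obtain ⟨b, hb, σ₁, τ₁, hdec⟩ := exists_decomp π hπ
      have hσt := (avoids231_joinPerm_iff (ha := hb)).mp (hdec ▸ hπ)
      have hbn : b ≠ n := by
        intro hbn
        exact hns (hdec ▸ (hasSplit_joinPerm_iff).mpr (Or.inr hbn))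
      have hσs : ¬ HasSplit σ₁ := by
        intro hs
        exact hns (hdec ▸ (hasSplit_joinPerm_iff).mpr (Or.inl hs))
      refine ⟨⟨⟨b, by omega⟩, ⟨σ₁, hσt.1, hσs⟩, ⟨τ₁, hσt.2⟩⟩, ?_⟩
      exact Subtype.ext hdec.symm
  have hcard := Nat.card_eq_of_bijective Ψ hbij
  rw [fineCount_eq_card, ← hcard, nat_card_sigma]
  refine Finset.sum_congr rfl fun x _ => ?_
  rw [Nat.card_prod, fineCount_eq_card]
  rfl

lemma fineCount_succ' (n : ℕ) :
    fineCount (n + 1) = ∑ x : Fin n, fineCount x * catalan (n - x) := by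
  rw [fineCount_succ]
  exact Finset.sum_congr rfl fun x _ => by rw [avCount_eq_catalan]

lemma catalan_four : catalan 4 = 14 := by
  rw [catalan_succ]
  norm_num [Fin.sum_univ_succ, catalan_zero, catalan_one, catalan_two, catalan_three]

lemma catalan_five : catalan 5 = 42 := by
  rw [catalan_succ]
  norm_num [Fin.sum_univ_succ, catalan_zero, catalan_one, catalan_two, catalan_three, catalan_four]

lemma catalan_six : catalan 6 = 132 := by
  rw [catalan_succ]
  norm_num [Fin.sum_univ_succ, catalan_zero, catalan_one, catalan_two, catalan_three, catalan_four,
    catalan_five]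

lemma catalan_seven : catalan 7 = 429 := by
  rw [catalan_succ]
  norm_num [Fin.sum_univ_succ, catalan_zero, catalan_one, catalan_two, catalan_three, catalan_four,
    catalan_five, catalan_six]

lemma fineCount_one' : fineCount 1 = 0 := by
  have h := fineCount_succ' 0
  simpa using h

lemma fineCount_two : fineCount 2 = 1 := by
  have h := fineCount_succ' 1
  norm_num [Fin.sum_univ_succ, fineCount_zero', fineCount_one', catalan_one] at h
  exact h

lemma fineCount_three : fineCount 3 = 2 := by
  have h := fineCount_succ' 2
  norm_num [Fin.sum_univ_succ, fineCount_zero', fineCount_one', fineCount_two,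
    catalan_one, catalan_two] at h
  exact h

lemma fineCount_four : fineCount 4 = 6 := by
  have h := fineCount_succ' 3
  norm_num [Fin.sum_univ_succ, fineCount_zero', fineCount_one', fineCount_two, fineCount_three,
    catalan_one, catalan_two, catalan_three] at h
  exact h

lemma fineCount_five : fineCount 5 = 18 := by
  have h := fineCount_succ' 4
  norm_num [Fin.sum_univ_succ, fineCount_zero', fineCount_one', fineCount_two, fineCount_three,
    fineCount_four, catalan_one, catalan_two, catalan_three, catalan_four] at h
  exact h

lemma fineCount_six : fineCount 6 = 57 := by
  have h := fineCount_succ' 5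
  norm_num [Fin.sum_univ_succ, fineCount_zero', fineCount_one', fineCount_two, fineCount_three,
    fineCount_four, fineCount_five, catalan_one, catalan_two, catalan_three, catalan_four,
    catalan_five] at h
  exact h

lemma fineCount_seven : fineCount 7 = 186 := by
  have h := fineCount_succ' 6
  norm_num [Fin.sum_univ_succ, fineCount_zero', fineCount_one', fineCount_two, fineCount_three,
    fineCount_four, fineCount_five, fineCount_six, catalan_one, catalan_two, catalan_three,
    catalan_four, catalan_five, catalan_six] at h
  exact h

lemma fineCount_eight : fineCount 8 = 622 := by
  have h := fineCount_succ' 7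
  norm_num [Fin.sum_univ_succ, fineCount_zero', fineCount_one', fineCount_two, fineCount_three,
    fineCount_four, fineCount_five, fineCount_six, fineCount_seven, catalan_one, catalan_two,
    catalan_three, catalan_four, catalan_five, catalan_six, catalan_seven] at h
  exact h

lemma fineCount_gf_eq :
    (PowerSeries.mk fun n => (fineCount n : ℚ)) =
        1 + PowerSeries.X * (PowerSeries.mk fun n => (fineCount n : ℚ)) *
          ((PowerSeries.mk fun n => (catalan n : ℚ)) - 1) := by
  ext d
  rcases d with _ | d
  · simp [PowerSeries.coeff_zero_eq_constantCoeff, map_add, map_mul, fineCount_zero']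
  · rw [map_add, PowerSeries.coeff_one, mul_assoc, PowerSeries.coeff_succ_X_mul,
      PowerSeries.coeff_mul, PowerSeries.coeff_mk]
    simp only [map_sub, PowerSeries.coeff_mk, PowerSeries.coeff_one]
    rw [Finset.Nat.sum_antidiagonal_eq_sum_range_succ_mk, Finset.sum_range_succ]
    have hlast : ((fineCount d : ℚ)) * ((catalan (d - d) : ℚ) - if d - d = 0 then 1 else 0) = 0 := by
      simp
    rw [hlast, add_zero, if_neg (Nat.succ_ne_zero d), zero_add]
    have hterm : ∀ k ∈ Finset.range d,
        ((fineCount k : ℚ)) * ((catalan (d - k) : ℚ) - if d - k = 0 then 1 else 0) =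
          (fineCount k : ℚ) * (catalan (d - k) : ℚ) := by
      intro k hk
      rw [Finset.mem_range] at hk
      rw [if_neg (by omega), sub_zero]
    rw [Finset.sum_congr rfl hterm, fineCount_succ', ← Fin.sum_univ_eq_sum_range
      (fun k => (fineCount k : ℚ) * (catalan (d - k) : ℚ)) d]
    push_cast
    ring_nf

/-- The counting sequence of `{231, (1, {⟨0,1⟩,⟨1,0⟩})}`-avoiders is the Fine
numbers: its generating function `F` satisfies `F = 1 + x·F·(C - 1)`, where `C`
is the Catalan generating function, and it begins 1, 0, 1, 2, 6, 18, 57, 186, 622. -/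
theorem fineCount_gf :
    ((PowerSeries.mk fun n => (fineCount n : ℚ)) =
        1 + PowerSeries.X * (PowerSeries.mk fun n => (fineCount n : ℚ)) *
          ((PowerSeries.mk fun n => (catalan n : ℚ)) - 1)) ∧
      fineCount 0 = 1 ∧ fineCount 1 = 0 ∧ fineCount 2 = 1 ∧ fineCount 3 = 2 ∧
      fineCount 4 = 6 ∧ fineCount 5 = 18 ∧ fineCount 6 = 57 ∧
      fineCount 7 = 186 ∧ fineCount 8 = 622 :=
  ⟨fineCount_gf_eq, fineCount_zero', fineCount_one', fineCount_two, fineCount_three,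
    fineCount_four, fineCount_five, fineCount_six, fineCount_seven, fineCount_eight⟩
end

section
/- Among 231-avoiding permutations: (a) the number of length-n permutations not starting with their maximum equals the number not ending with their maximum; (b) both equal the number not starting with their minimum; and for n ≥ 1 all three counts equal C_n − C_{n−1}. -/
namespace Av231

variable {k : ℕ}


lemma lt_of_lt_pos (π : Equiv.Perm (Fin (k+1))) (hπ : Avoids231 π)
    (m : Fin (k+1)) (hm : π m = Fin.last k) {i : Fin (k+1)} (hi : i < m) :
    (π i : ℕ) < m := by
  by_contra h
  push_neg at h
  have hne : π i ≠ Fin.last k := by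
    intro he
    exact absurd (π.injective (he.trans hm.symm)) (ne_of_lt hi)
  have hlt : π i < Fin.last k := lt_of_le_of_ne (Fin.le_last _) hne
  have hmaps : ∀ v ∈ Finset.Iio (π i), π.symm v ∈ Finset.Iio m \ {i} := by
    intro v hv
    simp only [Finset.mem_Iio] at hv
    have hvne : π.symm v ≠ m := by
      intro he
      have hveq : v = Fin.last k := by rw [← hm, ← he, Equiv.apply_symm_apply]
      rw [hveq] at hv
      exact absurd (hv.trans hlt) (lt_irrefl _)
    have hvlt : π.symm v < m := by
      rcases lt_or_gt_of_ne hvne with h' | h'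
      · exact h'
      · exact absurd ⟨i, m, π.symm v, hi, h', by simpa using hv, by rw [hm]; exact hlt⟩ hπ
    have hvi : π.symm v ≠ i := by
      intro he
      have hveq : v = π i := by rw [← he, Equiv.apply_symm_apply]
      rw [hveq] at hv
      exact absurd hv (lt_irrefl _)
    simp [Finset.mem_sdiff, Finset.mem_Iio, hvlt, hvi]
  have hinj : Set.InjOn (fun v => π.symm v) (Finset.Iio (π i)) :=
    fun a _ b _ hab => π.symm.injective hab
  have hcard := Finset.card_le_card_of_injOn _ hmaps hinj
  rw [Fin.card_Iio, Finset.card_sdiff_of_subset (by simp [Finset.mem_Iio, hi]),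
    Fin.card_Iio, Finset.card_singleton] at hcard
  have : 0 < (m : ℕ) := lt_of_le_of_lt (Nat.zero_le _) hi
  omega

lemma symm_lt_of_lt (π : Equiv.Perm (Fin (k+1))) (hπ : Avoids231 π)
    (m : Fin (k+1)) (hm : π m = Fin.last k) {v : Fin (k+1)} (hv : (v:ℕ) < m) :
    (π.symm v : ℕ) < m := by
  have hsurj := Finset.surj_on_of_inj_on_of_card_le (s := Finset.Iio m) (t := Finset.Iio m)
    (fun a _ => π a)
    (fun a ha => by
      simp only [Finset.mem_Iio] at ha ⊢
      rw [Fin.lt_def]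
      exact lt_of_lt_pos π hπ m hm ha)
    (fun a b _ _ h => π.injective h) le_rfl
  obtain ⟨a, ha, he⟩ := hsurj v (by rw [Finset.mem_Iio, Fin.lt_def]; exact hv)
  rw [he, Equiv.symm_apply_apply]
  rw [Finset.mem_Iio, Fin.lt_def] at ha
  exact ha

lemma ge_of_gt_pos (π : Equiv.Perm (Fin (k+1))) (hπ : Avoids231 π)
    (m : Fin (k+1)) (hm : π m = Fin.last k) {i : Fin (k+1)} (hi : m < i) :
    (m : ℕ) ≤ (π i : ℕ) ∧ (π i : ℕ) < k := by
  constructor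
  · by_contra h
    push_neg at h
    have := symm_lt_of_lt π hπ m hm (v := π i) h
    rw [Equiv.symm_apply_apply] at this
    rw [Fin.lt_def] at hi
    omega
  · have hne : π i ≠ Fin.last k := by
      intro he
      exact absurd (π.injective (he.trans hm.symm)) (ne_of_gt hi)
    have h1 : (π i : ℕ) < k + 1 := (π i).isLt
    have h2 : (π i : ℕ) ≠ k := by
      intro he
      exact hne (Fin.ext (by simp [he]))
    omega






abbrev Avd (n : ℕ) := {π : Equiv.Perm (Fin n) // Avoids231 π}

abbrev Fib (k : ℕ) (m : Fin (k+1)) :=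
  {π : Equiv.Perm (Fin (k+1)) // Avoids231 π ∧ π.symm (Fin.last k) = m}

lemma Fib.hm {m : Fin (k+1)} (p : Fib k m) : p.1 m = Fin.last k := by
  have h := p.2.2
  rw [Equiv.symm_apply_eq] at h
  exact h.symm

noncomputable def leftPerm {m : Fin (k+1)} (p : Fib k m) : Equiv.Perm (Fin (m:ℕ)) :=
  Equiv.ofBijective
    (fun i => (⟨(p.1 (Fin.castLE m.isLt.le i) : ℕ),
      lt_of_lt_pos p.1 p.2.1 m p.hm (by rw [Fin.lt_def]; simpa using i.isLt)⟩ : Fin (m:ℕ)))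
    (Finite.injective_iff_bijective.mp (by
      intro a b hab
      have h := congrArg Fin.val hab
      simp only at h
      have := p.1.injective (Fin.ext h)
      have := congrArg Fin.val this
      simpa [Fin.ext_iff] using this))

noncomputable def rightPerm {m : Fin (k+1)} (p : Fib k m) : Equiv.Perm (Fin (k - (m:ℕ))) :=
  Equiv.ofBijective
    (fun j => (⟨(p.1 ⟨(m:ℕ) + 1 + j, by have := j.isLt; omega⟩ : ℕ) - m, by
      have h := ge_of_gt_pos p.1 p.2.1 m p.hm
        (i := ⟨(m:ℕ) + 1 + j, by have := j.isLt; omega⟩) (by rw [Fin.lt_def]; simp; omega)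
      have := j.isLt
      omega⟩ : Fin (k - (m:ℕ))))
    (Finite.injective_iff_bijective.mp (by
      intro a b hab
      have h := congrArg Fin.val hab
      simp only at h
      have ha := ge_of_gt_pos p.1 p.2.1 m p.hm
        (i := ⟨(m:ℕ) + 1 + a, by have := a.isLt; omega⟩) (by rw [Fin.lt_def]; simp; omega)
      have hb := ge_of_gt_pos p.1 p.2.1 m p.hm
        (i := ⟨(m:ℕ) + 1 + b, by have := b.isLt; omega⟩) (by rw [Fin.lt_def]; simp; omega)
      have hv : (p.1 ⟨(m:ℕ) + 1 + a, by have := a.isLt; omega⟩ : ℕ)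
          = (p.1 ⟨(m:ℕ) + 1 + b, by have := b.isLt; omega⟩ : ℕ) := by omega
      have := p.1.injective (Fin.ext hv)
      have := congrArg Fin.val this
      simp only at this
      exact Fin.ext (by omega)))

lemma leftPerm_avoids {m : Fin (k+1)} (p : Fib k m) : Avoids231 (leftPerm p) := by
  rintro ⟨i, j, l, hij, hjl, h1, h2⟩
  apply p.2.1
  refine ⟨Fin.castLE m.isLt.le i, Fin.castLE m.isLt.le j, Fin.castLE m.isLt.le l,
    ?_, ?_, ?_, ?_⟩
  · rw [Fin.lt_def]; simp only [Fin.coe_castLE]; exact Fin.lt_def.mp hij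
  · rw [Fin.lt_def]; simp only [Fin.coe_castLE]; exact Fin.lt_def.mp hjl
  · have h1' := Fin.lt_def.mp h1
    simp only [leftPerm, Equiv.ofBijective_apply] at h1'
    rw [Fin.lt_def]
    exact h1'
  · have h2' := Fin.lt_def.mp h2
    simp only [leftPerm, Equiv.ofBijective_apply] at h2'
    rw [Fin.lt_def]
    exact h2'

lemma rightPerm_avoids {m : Fin (k+1)} (p : Fib k m) : Avoids231 (rightPerm p) := by
  rintro ⟨i, j, l, hij, hjl, h1, h2⟩
  apply p.2.1
  have hi := ge_of_gt_pos p.1 p.2.1 m p.hm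
    (i := ⟨(m:ℕ) + 1 + i, by have := i.isLt; omega⟩) (by rw [Fin.lt_def]; simp; omega)
  have hj := ge_of_gt_pos p.1 p.2.1 m p.hm
    (i := ⟨(m:ℕ) + 1 + j, by have := j.isLt; omega⟩) (by rw [Fin.lt_def]; simp; omega)
  have hl := ge_of_gt_pos p.1 p.2.1 m p.hm
    (i := ⟨(m:ℕ) + 1 + l, by have := l.isLt; omega⟩) (by rw [Fin.lt_def]; simp; omega)
  rw [Fin.lt_def] at hij hjl
  refine ⟨⟨(m:ℕ) + 1 + i, by have := i.isLt; omega⟩,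
    ⟨(m:ℕ) + 1 + j, by have := j.isLt; omega⟩,
    ⟨(m:ℕ) + 1 + l, by have := l.isLt; omega⟩, ?_, ?_, ?_, ?_⟩
  · rw [Fin.lt_def]; simp; omega
  · rw [Fin.lt_def]; simp; omega
  · have h1' := Fin.lt_def.mp h1
    simp only [rightPerm, Equiv.ofBijective_apply] at h1'
    rw [Fin.lt_def]
    omega
  · have h2' := Fin.lt_def.mp h2
    simp only [rightPerm, Equiv.ofBijective_apply] at h2'
    rw [Fin.lt_def]
    omega

noncomputable def toPair {m : Fin (k+1)} (p : Fib k m) : Avd (m:ℕ) × Avd (k - (m:ℕ)) :=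
  (⟨leftPerm p, leftPerm_avoids p⟩, ⟨rightPerm p, rightPerm_avoids p⟩)




def glueFun (m : Fin (k+1)) (σ : Equiv.Perm (Fin (m:ℕ)))
    (τ : Equiv.Perm (Fin (k - (m:ℕ)))) : Fin (k+1) → Fin (k+1) :=
  fun i =>
    if h : (i:ℕ) < (m:ℕ) then
      ⟨(σ ⟨i, h⟩ : ℕ), by have := (σ ⟨(i:ℕ), h⟩).isLt; have := m.isLt; omega⟩
    else if h2 : (i:ℕ) = (m:ℕ) then Fin.last k
    else
      ⟨(τ ⟨(i:ℕ) - ((m:ℕ) + 1), by have := i.isLt; omega⟩ : ℕ) + m, by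
        have := (τ ⟨(i:ℕ) - ((m:ℕ) + 1), by have := i.isLt; omega⟩).isLt
        have := i.isLt
        omega⟩

lemma glueFun_val_lt {m : Fin (k+1)} {σ : Equiv.Perm (Fin (m:ℕ))}
    {τ : Equiv.Perm (Fin (k - (m:ℕ)))} {i : Fin (k+1)} (h : (i:ℕ) < (m:ℕ)) :
    (glueFun m σ τ i : ℕ) = (σ ⟨i, h⟩ : ℕ) := by
  simp only [glueFun]
  rw [dif_pos h]

lemma glueFun_val_eq {m : Fin (k+1)} {σ : Equiv.Perm (Fin (m:ℕ))}
    {τ : Equiv.Perm (Fin (k - (m:ℕ)))} {i : Fin (k+1)} (h : (i:ℕ) = (m:ℕ)) :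
    glueFun m σ τ i = Fin.last k := by
  simp only [glueFun]
  rw [dif_neg (by omega), dif_pos h]

lemma glueFun_val_gt {m : Fin (k+1)} {σ : Equiv.Perm (Fin (m:ℕ))}
    {τ : Equiv.Perm (Fin (k - (m:ℕ)))} {i : Fin (k+1)} (h : (m:ℕ) < (i:ℕ)) :
    (glueFun m σ τ i : ℕ)
      = (τ ⟨(i:ℕ) - ((m:ℕ) + 1), by have := i.isLt; omega⟩ : ℕ) + m := by
  simp only [glueFun]
  rw [dif_neg (by omega), dif_neg (by omega)]

lemma glueFun_inj (m : Fin (k+1)) (σ : Equiv.Perm (Fin (m:ℕ)))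
    (τ : Equiv.Perm (Fin (k - (m:ℕ)))) : Function.Injective (glueFun m σ τ) := by
  intro a b hab
  have hval := congrArg Fin.val hab
  have hmk : (m:ℕ) ≤ k := by have := m.isLt; omega
  rcases Nat.lt_trichotomy (a:ℕ) (m:ℕ) with ha | ha | ha <;>
    rcases Nat.lt_trichotomy (b:ℕ) (m:ℕ) with hb | hb | hb
  · rw [glueFun_val_lt ha, glueFun_val_lt hb] at hval
    have := σ.injective (Fin.ext hval)
    have := congrArg Fin.val this
    exact Fin.ext (by simpa using this)
  · rw [glueFun_val_lt ha, glueFun_val_eq hb] at hval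
    have := (σ ⟨(a:ℕ), ha⟩).isLt
    simp only [Fin.val_last] at hval
    omega
  · rw [glueFun_val_lt ha, glueFun_val_gt hb] at hval
    have := (σ ⟨(a:ℕ), ha⟩).isLt
    omega
  · rw [glueFun_val_eq ha, glueFun_val_lt hb] at hval
    have := (σ ⟨(b:ℕ), hb⟩).isLt
    simp only [Fin.val_last] at hval
    omega
  · exact Fin.ext (by omega)
  · rw [glueFun_val_eq ha, glueFun_val_gt hb] at hval
    have := (τ ⟨(b:ℕ) - ((m:ℕ) + 1), by have := b.isLt; omega⟩).isLt
    simp only [Fin.val_last] at hval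
    omega
  · rw [glueFun_val_gt ha, glueFun_val_lt hb] at hval
    have := (σ ⟨(b:ℕ), hb⟩).isLt
    omega
  · rw [glueFun_val_gt ha, glueFun_val_eq hb] at hval
    have := (τ ⟨(a:ℕ) - ((m:ℕ) + 1), by have := a.isLt; omega⟩).isLt
    simp only [Fin.val_last] at hval
    omega
  · rw [glueFun_val_gt ha, glueFun_val_gt hb] at hval
    have hτ : τ ⟨(a:ℕ) - ((m:ℕ) + 1), by have := a.isLt; omega⟩
        = τ ⟨(b:ℕ) - ((m:ℕ) + 1), by have := b.isLt; omega⟩ := Fin.ext (by omega)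
    have := τ.injective hτ
    have := congrArg Fin.val this
    simp only at this
    exact Fin.ext (by omega)

noncomputable def gluePerm (m : Fin (k+1)) (σ : Equiv.Perm (Fin (m:ℕ)))
    (τ : Equiv.Perm (Fin (k - (m:ℕ)))) : Equiv.Perm (Fin (k+1)) :=
  Equiv.ofBijective (glueFun m σ τ) (Finite.injective_iff_bijective.mp (glueFun_inj m σ τ))

lemma gluePerm_avoids (m : Fin (k+1)) (σ : Equiv.Perm (Fin (m:ℕ)))
    (τ : Equiv.Perm (Fin (k - (m:ℕ)))) (hσ : Avoids231 σ) (hτ : Avoids231 τ) :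
    Avoids231 (gluePerm m σ τ) := by
  rintro ⟨i, j, l, hij, hjl, h1, h2⟩
  simp only [gluePerm, Equiv.ofBijective_apply] at h1 h2
  have h1' := Fin.lt_def.mp h1
  have h2' := Fin.lt_def.mp h2
  have hij' := Fin.lt_def.mp hij
  have hjl' := Fin.lt_def.mp hjl
  have hmk : (m:ℕ) ≤ k := by have := m.isLt; omega
  rcases Nat.lt_trichotomy (i:ℕ) (m:ℕ) with hi | hi | hi
  · -- i left: values of g i < m, so g l < m forces l left
    rw [glueFun_val_lt hi] at h1' h2'
    have hgi := (σ ⟨(i:ℕ), hi⟩).isLt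
    have hl : (l:ℕ) < (m:ℕ) := by
      rcases Nat.lt_trichotomy (l:ℕ) (m:ℕ) with h' | h' | h'
      · exact h'
      · rw [glueFun_val_eq h'] at h1'
        simp only [Fin.val_last] at h1'
        omega
      · rw [glueFun_val_gt h'] at h1'
        omega
    have hj : (j:ℕ) < (m:ℕ) := by omega
    rw [glueFun_val_lt hl] at h1'
    rw [glueFun_val_lt hj] at h2'
    exact hσ ⟨⟨i, hi⟩, ⟨j, hj⟩, ⟨l, hl⟩, Fin.lt_def.mpr (by simpa using hij'),
      Fin.lt_def.mpr (by simpa using hjl'), Fin.lt_def.mpr h1', Fin.lt_def.mpr h2'⟩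
  · -- i = m: g i = last, can't have g i < g j
    rw [glueFun_val_eq hi] at h2'
    simp only [Fin.val_last] at h2'
    have := (glueFun m σ τ j).isLt
    omega
  · -- i right
    have hj : (m:ℕ) < (j:ℕ) := by omega
    have hl : (m:ℕ) < (l:ℕ) := by omega
    rw [glueFun_val_gt hi] at h1' h2'
    rw [glueFun_val_gt hl] at h1'
    rw [glueFun_val_gt hj] at h2'
    refine hτ ⟨⟨(i:ℕ) - ((m:ℕ)+1), by have := i.isLt; omega⟩,
      ⟨(j:ℕ) - ((m:ℕ)+1), by have := j.isLt; omega⟩,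
      ⟨(l:ℕ) - ((m:ℕ)+1), by have := l.isLt; omega⟩,
      Fin.lt_def.mpr (by simp; omega), Fin.lt_def.mpr (by simp; omega),
      Fin.lt_def.mpr (by omega), Fin.lt_def.mpr (by omega)⟩

lemma gluePerm_max (m : Fin (k+1)) (σ : Equiv.Perm (Fin (m:ℕ)))
    (τ : Equiv.Perm (Fin (k - (m:ℕ)))) : (gluePerm m σ τ).symm (Fin.last k) = m := by
  rw [Equiv.symm_apply_eq]
  exact (glueFun_val_eq (i := m) rfl).symm



lemma toPair_injective (m : Fin (k+1)) : Function.Injective (toPair (k := k) (m := m)) := by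
  intro p q hpq
  have hL : leftPerm p = leftPerm q := congrArg Subtype.val (congrArg Prod.fst hpq)
  have hR : rightPerm p = rightPerm q := congrArg Subtype.val (congrArg Prod.snd hpq)
  apply Subtype.ext
  apply Equiv.ext
  intro i
  apply Fin.ext
  rcases Nat.lt_trichotomy (i:ℕ) (m:ℕ) with hi | hi | hi
  · have h := congrArg Fin.val (Equiv.ext_iff.mp hL ⟨(i:ℕ), hi⟩)
    simp only [leftPerm, Equiv.ofBijective_apply] at h
    have hcast : Fin.castLE m.isLt.le ⟨(i:ℕ), hi⟩ = i := Fin.ext rfl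
    rwa [hcast] at h
  · have him : i = m := Fin.ext hi
    rw [him, p.hm, q.hm]
  · have hj : ((i:ℕ) - ((m:ℕ)+1)) < k - (m:ℕ) := by have := i.isLt; omega
    have h := congrArg Fin.val (Equiv.ext_iff.mp hR ⟨(i:ℕ) - ((m:ℕ)+1), hj⟩)
    simp only [rightPerm, Equiv.ofBijective_apply] at h
    have hcast : (⟨(m:ℕ) + 1 + ((i:ℕ) - ((m:ℕ)+1)), by have := i.isLt; omega⟩ : Fin (k+1))
        = i := Fin.ext (by simp; omega)
    rw [hcast] at h
    have hp := ge_of_gt_pos p.1 p.2.1 m p.hm (i := i) (Fin.lt_def.mpr hi)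
    have hq := ge_of_gt_pos q.1 q.2.1 m q.hm (i := i) (Fin.lt_def.mpr hi)
    omega

lemma toPair_surjective (m : Fin (k+1)) : Function.Surjective (toPair (k := k) (m := m)) := by
  rintro ⟨⟨σ, hσ⟩, ⟨τ, hτ⟩⟩
  refine ⟨⟨gluePerm m σ τ, gluePerm_avoids m σ τ hσ hτ, gluePerm_max m σ τ⟩, ?_⟩
  have hg : ∀ i : Fin (k+1), (gluePerm m σ τ) i = glueFun m σ τ i := fun i => rfl
  refine Prod.ext (Subtype.ext ?_) (Subtype.ext ?_)
  · apply Equiv.ext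
    intro i
    apply Fin.ext
    simp only [toPair, leftPerm, Equiv.ofBijective_apply]
    rw [hg]
    have hi : ((Fin.castLE m.isLt.le i : Fin (k+1)) : ℕ) < (m:ℕ) := by simpa using i.isLt
    rw [glueFun_val_lt hi]
    congr 1
  · apply Equiv.ext
    intro j
    apply Fin.ext
    simp only [toPair, rightPerm, Equiv.ofBijective_apply]
    rw [hg]
    have hj : (m:ℕ) < ((⟨(m:ℕ) + 1 + (j:ℕ), by have := j.isLt; omega⟩ : Fin (k+1)) : ℕ) := by
      show (m:ℕ) < (m:ℕ) + 1 + (j:ℕ)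
      omega
    rw [glueFun_val_gt hj]
    have harg : (⟨((⟨(m:ℕ) + 1 + (j:ℕ), by have := j.isLt; omega⟩ : Fin (k+1)) : ℕ)
        - ((m:ℕ) + 1), by have := j.isLt; show (m:ℕ)+1+(j:ℕ) - ((m:ℕ)+1) < k - (m:ℕ); omega⟩
        : Fin (k - (m:ℕ))) = j :=
      Fin.ext (by show (m:ℕ)+1+(j:ℕ) - ((m:ℕ)+1) = (j:ℕ); omega)
    rw [harg]
    omega

lemma card_fib (m : Fin (k+1)) :
    Nat.card (Fib k m) = Nat.card (Avd (m:ℕ)) * Nat.card (Avd (k - (m:ℕ))) := by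
  rw [← Nat.card_prod]
  exact Nat.card_eq_of_bijective _ ⟨toPair_injective m, toPair_surjective m⟩

lemma card_avd_succ :
    Nat.card (Avd (k+1)) = ∑ m : Fin (k+1), Nat.card (Avd (m:ℕ)) * Nat.card (Avd (k - (m:ℕ))) := by
  classical
  have e1 : (Σ m : Fin (k+1), {p : Avd (k+1) // p.1.symm (Fin.last k) = m}) ≃ Avd (k+1) :=
    Equiv.sigmaFiberEquiv _
  have e2 : ∀ m : Fin (k+1), {p : Avd (k+1) // p.1.symm (Fin.last k) = m} ≃ Fib k m := fun m =>
    { toFun := fun p => ⟨p.1.1, p.1.2, p.2⟩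
      invFun := fun q => ⟨⟨q.1, q.2.1⟩, q.2.2⟩
      left_inv := fun p => rfl
      right_inv := fun q => rfl }
  rw [← Nat.card_congr e1]
  rw [Nat.card_eq_fintype_card, Fintype.card_sigma]
  refine Finset.sum_congr rfl fun m _ => ?_
  rw [← card_fib m, ← Nat.card_eq_fintype_card]
  exact Nat.card_congr (e2 m)

lemma card_avd_zero : Nat.card (Avd 0) = 1 := by
  have : ∀ p : Avd 0, p = ⟨1, by rintro ⟨i, -⟩; exact i.elim0⟩ := by
    rintro ⟨π, hπ⟩
    exact Subtype.ext (Equiv.ext fun i => i.elim0)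
  haveI : Unique (Avd 0) := ⟨⟨⟨1, by rintro ⟨i, -⟩; exact i.elim0⟩⟩, this⟩
  exact Nat.card_unique

lemma card_avd : ∀ n : ℕ, Nat.card (Avd n) = catalan n := by
  intro n
  induction n using Nat.strong_induction_on with
  | _ n ih =>
    match n with
    | 0 => rw [card_avd_zero, catalan_zero]
    | k + 1 =>
      rw [card_avd_succ, catalan_succ]
      refine Finset.sum_congr rfl fun m _ => ?_
      rw [ih (m:ℕ) (by have := m.isLt; omega), ih (k - (m:ℕ)) (by omega)]

lemma succ_ne_zero_val {p : Equiv.Perm (Fin (k+1))} (hp : p 0 = 0) (i : Fin k) :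
    1 ≤ (p i.succ : ℕ) := by
  by_contra h
  push_neg at h
  have h0 : p i.succ = 0 := Fin.ext (by
    have h0' : ((0 : Fin (k+1)) : ℕ) = 0 := rfl
    omega)
  have := p.injective (h0.trans hp.symm)
  exact Fin.succ_ne_zero i this

noncomputable def dropPerm (p : {π : Equiv.Perm (Fin (k+1)) // Avoids231 π ∧ π 0 = 0}) :
    Equiv.Perm (Fin k) :=
  Equiv.ofBijective
    (fun i => (⟨(p.1 i.succ : ℕ) - 1, by
      have h1 := succ_ne_zero_val p.2.2 i
      have h2 := (p.1 i.succ).isLt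
      omega⟩ : Fin k))
    (Finite.injective_iff_bijective.mp (by
      intro a b hab
      have h := congrArg Fin.val hab
      simp only at h
      have ha := succ_ne_zero_val p.2.2 a
      have hb := succ_ne_zero_val p.2.2 b
      have : p.1 a.succ = p.1 b.succ := Fin.ext (by omega)
      have := p.1.injective this
      exact Fin.succ_injective _ this))

lemma dropPerm_avoids (p : {π : Equiv.Perm (Fin (k+1)) // Avoids231 π ∧ π 0 = 0}) :
    Avoids231 (dropPerm p) := by
  rintro ⟨i, j, l, hij, hjl, h1, h2⟩
  have h1' := Fin.lt_def.mp h1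
  have h2' := Fin.lt_def.mp h2
  simp only [dropPerm, Equiv.ofBijective_apply] at h1' h2'
  have hi := succ_ne_zero_val p.2.2 i
  have hj := succ_ne_zero_val p.2.2 j
  have hl := succ_ne_zero_val p.2.2 l
  exact p.2.1 ⟨i.succ, j.succ, l.succ, Fin.succ_lt_succ_iff.mpr hij,
    Fin.succ_lt_succ_iff.mpr hjl, Fin.lt_def.mpr (by omega), Fin.lt_def.mpr (by omega)⟩

noncomputable def dropMap (p : {π : Equiv.Perm (Fin (k+1)) // Avoids231 π ∧ π 0 = 0}) :
    Avd k := ⟨dropPerm p, dropPerm_avoids p⟩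

def liftFun (σ : Equiv.Perm (Fin k)) : Fin (k+1) → Fin (k+1) :=
  fun i =>
    if h : (i:ℕ) = 0 then 0
    else ⟨(σ ⟨(i:ℕ) - 1, by have := i.isLt; omega⟩ : ℕ) + 1, by
      have := (σ ⟨(i:ℕ) - 1, by have := i.isLt; omega⟩).isLt; omega⟩

lemma liftFun_val_ne (σ : Equiv.Perm (Fin k)) (a : Fin (k+1)) (ha : (a:ℕ) ≠ 0) :
    (liftFun σ a : ℕ) = (σ ⟨(a:ℕ) - 1, by have := a.isLt; omega⟩ : ℕ) + 1 := by
  simp only [liftFun]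
  rw [dif_neg ha]

lemma liftFun_val_zero (σ : Equiv.Perm (Fin k)) (a : Fin (k+1)) (ha : (a:ℕ) = 0) :
    (liftFun σ a : ℕ) = 0 := by
  simp only [liftFun]
  rw [dif_pos ha]
  rfl

lemma liftFun_inj (σ : Equiv.Perm (Fin k)) : Function.Injective (liftFun σ) := by
  intro a b hab
  have hval := congrArg Fin.val hab
  by_cases ha : (a:ℕ) = 0 <;> by_cases hb : (b:ℕ) = 0
  · exact Fin.ext (by omega)
  · rw [liftFun_val_zero σ a ha, liftFun_val_ne σ b hb] at hval
    omega
  · rw [liftFun_val_ne σ a ha, liftFun_val_zero σ b hb] at hval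
    omega
  · rw [liftFun_val_ne σ a ha, liftFun_val_ne σ b hb] at hval
    have harg : σ ⟨(a:ℕ) - 1, by have := a.isLt; omega⟩
        = σ ⟨(b:ℕ) - 1, by have := b.isLt; omega⟩ := Fin.ext (by omega)
    have := congrArg Fin.val (σ.injective harg)
    simp only at this
    exact Fin.ext (by omega)

noncomputable def liftPerm (σ : Equiv.Perm (Fin k)) : Equiv.Perm (Fin (k+1)) :=
  Equiv.ofBijective (liftFun σ) (Finite.injective_iff_bijective.mp (liftFun_inj σ))

lemma liftPerm_avoids (σ : Equiv.Perm (Fin k)) (hσ : Avoids231 σ) :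
    Avoids231 (liftPerm σ) := by
  rintro ⟨i, j, l, hij, hjl, h1, h2⟩
  simp only [liftPerm, Equiv.ofBijective_apply] at h1 h2
  have h1' := Fin.lt_def.mp h1
  have h2' := Fin.lt_def.mp h2
  have hij' := Fin.lt_def.mp hij
  have hjl' := Fin.lt_def.mp hjl
  by_cases hi : (i:ℕ) = 0
  · rw [liftFun_val_zero σ i hi] at h1'
    omega
  · have hj : (j:ℕ) ≠ 0 := by omega
    have hl : (l:ℕ) ≠ 0 := by omega
    rw [liftFun_val_ne σ l hl, liftFun_val_ne σ i hi] at h1'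
    rw [liftFun_val_ne σ i hi, liftFun_val_ne σ j hj] at h2'
    refine hσ ⟨⟨(i:ℕ) - 1, by have := i.isLt; omega⟩, ⟨(j:ℕ) - 1, by have := j.isLt; omega⟩,
      ⟨(l:ℕ) - 1, by have := l.isLt; omega⟩, Fin.lt_def.mpr (by show (i:ℕ) - 1 < (j:ℕ) - 1; omega),
      Fin.lt_def.mpr (by show (j:ℕ) - 1 < (l:ℕ) - 1; omega), Fin.lt_def.mpr (by omega),
      Fin.lt_def.mpr (by omega)⟩

lemma liftPerm_zero (σ : Equiv.Perm (Fin k)) : liftPerm σ 0 = 0 := by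
  apply Fin.ext
  show (liftFun σ 0 : ℕ) = ((0 : Fin (k+1)) : ℕ)
  rw [liftFun_val_zero σ 0 rfl]
  rfl

lemma dropMap_bijective : Function.Bijective (dropMap (k := k)) := by
  constructor
  · intro p q hpq
    have hD : dropPerm p = dropPerm q := congrArg Subtype.val hpq
    apply Subtype.ext
    apply Equiv.ext
    intro i
    induction i using Fin.cases with
    | zero => rw [p.2.2, q.2.2]
    | succ i =>
      have h := congrArg Fin.val (Equiv.ext_iff.mp hD i)
      simp only [dropPerm, Equiv.ofBijective_apply] at h
      have hp := succ_ne_zero_val p.2.2 i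
      have hq := succ_ne_zero_val q.2.2 i
      exact Fin.ext (by omega)
  · rintro ⟨σ, hσ⟩
    refine ⟨⟨liftPerm σ, liftPerm_avoids σ hσ, liftPerm_zero σ⟩, ?_⟩
    apply Subtype.ext
    apply Equiv.ext
    intro i
    apply Fin.ext
    simp only [dropMap, dropPerm, Equiv.ofBijective_apply]
    show ((liftFun σ i.succ : Fin (k+1)) : ℕ) - 1 = (σ i : ℕ)
    rw [liftFun_val_ne σ i.succ (by simp [Fin.val_succ])]
    have harg : (⟨((i.succ : Fin (k+1)) : ℕ) - 1, by have := i.isLt; simp [Fin.val_succ]⟩ : Fin k)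
        = i := Fin.ext (by simp [Fin.val_succ])
    rw [harg]
    omega

lemma card_startmin :
    Nat.card {π : Equiv.Perm (Fin (k+1)) // Avoids231 π ∧ π 0 = 0} = catalan k := by
  rw [Nat.card_eq_of_bijective _ dropMap_bijective, card_avd]

lemma card_fib_zero : Nat.card (Fib k (0 : Fin (k+1))) = catalan k := by
  rw [card_fib]
  simp only [Fin.val_zero, Nat.sub_zero]
  rw [card_avd, card_avd, catalan_zero, one_mul]

lemma card_fib_last : Nat.card (Fib k (Fin.last k)) = catalan k := by
  rw [card_fib]
  simp only [Fin.val_last, Nat.sub_self]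
  rw [card_avd, card_avd, catalan_zero, mul_one]

lemma card_and_not {α : Type*} [Fintype α] (A B : α → Prop) :
    Nat.card {x // A x ∧ ¬ B x} = Nat.card {x // A x} - Nat.card {x // A x ∧ B x} := by
  classical
  rw [Nat.card_eq_fintype_card, Nat.card_eq_fintype_card, Nat.card_eq_fintype_card,
    Fintype.card_subtype, Fintype.card_subtype, Fintype.card_subtype]
  have h1 : Finset.filter (fun x => A x ∧ ¬ B x) Finset.univ
      = Finset.filter (fun x => A x) Finset.univ
        \ Finset.filter (fun x => A x ∧ B x) Finset.univ := by
    ext x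
    simp only [Finset.mem_filter, Finset.mem_sdiff, Finset.mem_univ, true_and]
    tauto
  rw [h1, Finset.card_sdiff_of_subset]
  intro x hx
  simp only [Finset.mem_filter, Finset.mem_univ, true_and] at hx ⊢
  exact hx.1

lemma count_one (k : ℕ) :
    Nat.card {π : Equiv.Perm (Fin (k+1)) // Avoids231 π ∧
        ∀ h : 0 < k+1, ∃ i : Fin (k+1), π ⟨0, h⟩ < π i}
      = catalan (k+1) - catalan k := by
  have hiff : ∀ π : Equiv.Perm (Fin (k+1)),
      (Avoids231 π ∧ ∀ h : 0 < k+1, ∃ i : Fin (k+1), π ⟨0, h⟩ < π i)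
        ↔ (Avoids231 π ∧ ¬ (π.symm (Fin.last k) = (0 : Fin (k+1)))) := by
    intro π
    refine and_congr_right fun _ => ⟨fun H he => ?_, fun H h => ?_⟩
    · obtain ⟨i, hi⟩ := H k.succ_pos
      have h0 : π (⟨0, k.succ_pos⟩ : Fin (k+1)) = Fin.last k := by
        have hz : (⟨0, k.succ_pos⟩ : Fin (k+1)) = 0 := Fin.ext (by simp)
        rw [hz, ← he, Equiv.apply_symm_apply]
      rw [h0] at hi
      exact absurd hi (not_lt.mpr (Fin.le_last _))
    · refine ⟨π.symm (Fin.last k), ?_⟩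
      have hne : π ⟨0, h⟩ ≠ Fin.last k := by
        intro he
        apply H
        rw [← he, Equiv.symm_apply_apply]
        exact Fin.ext (by simp)
      rw [Equiv.apply_symm_apply]
      exact lt_of_le_of_ne (Fin.le_last _) hne
  rw [Nat.card_congr (Equiv.subtypeEquivRight hiff),
    card_and_not (fun π : Equiv.Perm (Fin (k+1)) => Avoids231 π)
      (fun π => π.symm (Fin.last k) = (0 : Fin (k+1)))]
  rw [card_avd (k+1), card_fib_zero]

lemma count_two (k : ℕ) :
    Nat.card {π : Equiv.Perm (Fin (k+1)) // Avoids231 π ∧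
        ∀ h : 0 < k+1, ∃ i : Fin (k+1), π ⟨k+1-1, by omega⟩ < π i}
      = catalan (k+1) - catalan k := by
  have hzl : (⟨k+1-1, by omega⟩ : Fin (k+1)) = Fin.last k := Fin.ext (by simp)
  have hiff : ∀ π : Equiv.Perm (Fin (k+1)),
      (Avoids231 π ∧ ∀ h : 0 < k+1, ∃ i : Fin (k+1), π ⟨k+1-1, by omega⟩ < π i)
        ↔ (Avoids231 π ∧ ¬ (π.symm (Fin.last k) = Fin.last k)) := by
    intro π
    refine and_congr_right fun _ => ⟨fun H he => ?_, fun H h => ?_⟩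
    · obtain ⟨i, hi⟩ := H k.succ_pos
      rw [hzl, ← he, Equiv.apply_symm_apply] at hi
      exact absurd hi (not_lt.mpr (Fin.le_last _))
    · refine ⟨π.symm (Fin.last k), ?_⟩
      have hne : π ⟨k+1-1, by omega⟩ ≠ Fin.last k := by
        intro he
        apply H
        have h2 := congrArg π.symm he
        rw [Equiv.symm_apply_apply] at h2
        rw [← h2, hzl]
      rw [Equiv.apply_symm_apply]
      exact lt_of_le_of_ne (Fin.le_last _) hne
  rw [Nat.card_congr (Equiv.subtypeEquivRight hiff),
    card_and_not (fun π : Equiv.Perm (Fin (k+1)) => Avoids231 π)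
      (fun π => π.symm (Fin.last k) = Fin.last k)]
  rw [card_avd (k+1), card_fib_last]

lemma count_three (k : ℕ) :
    Nat.card {π : Equiv.Perm (Fin (k+1)) // Avoids231 π ∧
        ∀ h : 0 < k+1, ∃ i : Fin (k+1), π i < π ⟨0, h⟩}
      = catalan (k+1) - catalan k := by
  have hiff : ∀ π : Equiv.Perm (Fin (k+1)),
      (Avoids231 π ∧ ∀ h : 0 < k+1, ∃ i : Fin (k+1), π i < π ⟨0, h⟩)
        ↔ (Avoids231 π ∧ ¬ (π 0 = 0)) := by
    intro π
    have hz : (⟨0, k.succ_pos⟩ : Fin (k+1)) = 0 := Fin.ext (by simp)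
    refine and_congr_right fun _ => ⟨fun H he => ?_, fun H h => ?_⟩
    · obtain ⟨i, hi⟩ := H k.succ_pos
      rw [hz, he] at hi
      exact absurd hi (not_lt.mpr (Fin.zero_le _))
    · refine ⟨π.symm 0, ?_⟩
      have hne : π ⟨0, h⟩ ≠ 0 := by
        intro he
        apply H
        have h3 : (⟨0, h⟩ : Fin (k+1)) = 0 := Fin.ext (by simp)
        rw [← h3, he]
        exact h3.symm
      rw [Equiv.apply_symm_apply]
      exact lt_of_le_of_ne (Fin.zero_le _) (Ne.symm hne)
  rw [Nat.card_congr (Equiv.subtypeEquivRight hiff),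
    card_and_not (fun π : Equiv.Perm (Fin (k+1)) => Avoids231 π)
      (fun π => π 0 = 0)]
  rw [card_avd (k+1), card_startmin]

end Av231

/-- Among 231-avoiding permutations, the number of length-`n` permutations not
starting with their maximum, not ending with their maximum, and not starting
with their minimum all agree, and for `n ≥ 1` all equal `C_n - C_{n-1}`. -/
theorem av231_three_counts_eq (n : ℕ) :
    (Nat.card {π : Equiv.Perm (Fin n) // Avoids231 π ∧
        ∀ h : 0 < n, ∃ i : Fin n, π ⟨0, h⟩ < π i} =
      Nat.card {π : Equiv.Perm (Fin n) // Avoids231 π ∧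
        ∀ h : 0 < n, ∃ i : Fin n, π ⟨n - 1, by omega⟩ < π i}) ∧
    (Nat.card {π : Equiv.Perm (Fin n) // Avoids231 π ∧
        ∀ h : 0 < n, ∃ i : Fin n, π ⟨0, h⟩ < π i} =
      Nat.card {π : Equiv.Perm (Fin n) // Avoids231 π ∧
        ∀ h : 0 < n, ∃ i : Fin n, π i < π ⟨0, h⟩}) ∧
    (1 ≤ n →
      Nat.card {π : Equiv.Perm (Fin n) // Avoids231 π ∧
        ∀ h : 0 < n, ∃ i : Fin n, π ⟨0, h⟩ < π i} =
      catalan n - catalan (n - 1)) := by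
  rcases n with _ | k
  · have he : ∀ C : (π : Equiv.Perm (Fin 0)) → (h : (0:ℕ) < 0) → Prop,
        Nat.card {π : Equiv.Perm (Fin 0) // Avoids231 π ∧ ∀ h : (0:ℕ) < 0, C π h}
          = Nat.card {π : Equiv.Perm (Fin 0) // Avoids231 π} := fun C =>
      Nat.card_congr (Equiv.subtypeEquivRight fun π =>
        ⟨fun h => h.1, fun h => ⟨h, fun h0 => absurd h0 (lt_irrefl 0)⟩⟩)
    exact ⟨(he _).trans (he _).symm, (he _).trans (he _).symm, fun h => absurd h (by omega)⟩
  · have c1 := Av231.count_one k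
    have c2 := Av231.count_two k
    have c3 := Av231.count_three k
    refine ⟨c1.trans c2.symm, c1.trans c3.symm, fun _ => ?_⟩
    simpa using c1
end

section
/- Let m₁ = (12, {⟨0,2⟩,⟨2,0⟩,⟨2,1⟩}) and m₂ = (12, {⟨0,2⟩,⟨1,0⟩,⟨2,0⟩,⟨2,1⟩}). A permutation avoiding 231 avoids m₁ if and only if it avoids m₂. -/
/-- Raw box condition for a length-2 occurrence given by points `a < b`. -/
def RawBox {n : ℕ} (π : Equiv.Perm (Fin n)) (a b : Fin n) (p : ℕ × ℕ) : Prop :=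
  ∀ x : Fin n,
    ¬(extFun (![a, b] : Fin 2 → Fin n) p.1 < (x : ℕ) + 1 ∧
      (x : ℕ) + 1 < extFun (![a, b] : Fin 2 → Fin n) (p.1 + 1) ∧
      extFun (![π a, π b] : Fin 2 → Fin n) p.2 < (π x : ℕ) + 1 ∧
      (π x : ℕ) + 1 < extFun (![π a, π b] : Fin 2 → Fin n) (p.2 + 1))

lemma containsMesh_iff_s14 {n : ℕ} (π : Equiv.Perm (Fin n)) (R : Finset (ℕ × ℕ)) :
    ContainsMesh (1 : Equiv.Perm (Fin 2)) R π ↔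
      ∃ a b : Fin n, a < b ∧ π a < π b ∧ ∀ p ∈ R, RawBox π a b p := by
  constructor
  · rintro ⟨α, β, hα, hβ, hτ, hbox⟩
    have hβ0 : β 0 = π (α 0) := by simpa using (hτ 0).symm
    have hβ1 : β 1 = π (α 1) := by simpa using (hτ 1).symm
    have hαeq : α = ![α 0, α 1] := by
      funext i; fin_cases i <;> rfl
    have hβeq : β = ![π (α 0), π (α 1)] := by
      funext i; fin_cases i <;> simp [hβ0, hβ1]
    refine ⟨α 0, α 1, hα (by decide : (0 : Fin 2) < 1), ?_, ?_⟩
    · rw [← hβ0, ← hβ1]; exact hβ (by decide : (0 : Fin 2) < 1)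
    · intro p hp
      have := hbox p hp
      rwa [hαeq, hβeq] at this
  · rintro ⟨a, b, hab, hv, hbox⟩
    refine ⟨![a, b], ![π a, π b], ?_, ?_, ?_, hbox⟩
    · intro i j hij
      fin_cases i <;> fin_cases j <;> simp_all
    · intro i j hij
      fin_cases i <;> fin_cases j <;> simp_all
    · intro i; fin_cases i <;> simp


lemma rawBox_02 {n : ℕ} (π : Equiv.Perm (Fin n)) (a b : Fin n) :
    RawBox π a b (0, 2) ↔ ∀ x : Fin n, ¬((x : ℕ) < a ∧ (π b : ℕ) < π x) := by
  unfold RawBox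
  refine forall_congr' fun x => ?_
  have h1 : extFun (![a, b] : Fin 2 → Fin n) 0 = 0 := rfl
  have h2 : extFun (![a, b] : Fin 2 → Fin n) 1 = (a : ℕ) + 1 := rfl
  have h3 : extFun (![π a, π b] : Fin 2 → Fin n) 2 = (π b : ℕ) + 1 := rfl
  have h4 : extFun (![π a, π b] : Fin 2 → Fin n) 3 = n + 1 := rfl
  have := (π x).isLt
  simp only [h1, h2, h3, h4]
  omega

lemma rawBox_10 {n : ℕ} (π : Equiv.Perm (Fin n)) (a b : Fin n) :
    RawBox π a b (1, 0) ↔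
      ∀ x : Fin n, ¬((a : ℕ) < x ∧ (x : ℕ) < b ∧ (π x : ℕ) < π a) := by
  unfold RawBox
  refine forall_congr' fun x => ?_
  have h1 : extFun (![a, b] : Fin 2 → Fin n) 1 = (a : ℕ) + 1 := rfl
  have h2 : extFun (![a, b] : Fin 2 → Fin n) 2 = (b : ℕ) + 1 := rfl
  have h3 : extFun (![π a, π b] : Fin 2 → Fin n) 0 = 0 := rfl
  have h4 : extFun (![π a, π b] : Fin 2 → Fin n) 1 = (π a : ℕ) + 1 := rfl
  simp only [h1, h2, h3, h4]
  omega

lemma rawBox_20 {n : ℕ} (π : Equiv.Perm (Fin n)) (a b : Fin n) :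
    RawBox π a b (2, 0) ↔ ∀ x : Fin n, ¬((b : ℕ) < x ∧ (π x : ℕ) < π a) := by
  unfold RawBox
  refine forall_congr' fun x => ?_
  have h1 : extFun (![a, b] : Fin 2 → Fin n) 2 = (b : ℕ) + 1 := rfl
  have h2 : extFun (![a, b] : Fin 2 → Fin n) 3 = n + 1 := rfl
  have h3 : extFun (![π a, π b] : Fin 2 → Fin n) 0 = 0 := rfl
  have h4 : extFun (![π a, π b] : Fin 2 → Fin n) 1 = (π a : ℕ) + 1 := rfl
  have := x.isLt
  simp only [h1, h2, h3, h4]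
  omega

lemma rawBox_21 {n : ℕ} (π : Equiv.Perm (Fin n)) (a b : Fin n) :
    RawBox π a b (2, 1) ↔
      ∀ x : Fin n, ¬((b : ℕ) < x ∧ (π a : ℕ) < π x ∧ (π x : ℕ) < π b) := by
  unfold RawBox
  refine forall_congr' fun x => ?_
  have h1 : extFun (![a, b] : Fin 2 → Fin n) 2 = (b : ℕ) + 1 := rfl
  have h2 : extFun (![a, b] : Fin 2 → Fin n) 3 = n + 1 := rfl
  have h3 : extFun (![π a, π b] : Fin 2 → Fin n) 1 = (π a : ℕ) + 1 := rfl
  have h4 : extFun (![π a, π b] : Fin 2 → Fin n) 2 = (π b : ℕ) + 1 := rfl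
  have := x.isLt
  simp only [h1, h2, h3, h4]
  omega

/-- Under the dominating pattern 231, the mesh patterns
`(12, {⟨0,2⟩,⟨2,0⟩,⟨2,1⟩})` and `(12, {⟨0,2⟩,⟨1,0⟩,⟨2,0⟩,⟨2,1⟩})` are
coincident. -/
theorem coincidence_231_12_patterns {n : ℕ} (π : Equiv.Perm (Fin n))
    (h : Avoids231 π) :
    AvoidsMesh (1 : Equiv.Perm (Fin 2)) ({(0,2),(2,0),(2,1)} : Finset (ℕ × ℕ)) π ↔
      AvoidsMesh (1 : Equiv.Perm (Fin 2)) ({(0,2),(1,0),(2,0),(2,1)} : Finset (ℕ × ℕ)) π := by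
  unfold AvoidsMesh
  rw [not_iff_not]
  rw [containsMesh_iff_s14, containsMesh_iff_s14]
  constructor
  · -- hard direction: uses 231-avoidance
    rintro ⟨a, b, hab, hv, hbox⟩
    have h02 : ∀ x : Fin n, ¬((x : ℕ) < a ∧ (π b : ℕ) < π x) :=
      (rawBox_02 π a b).mp (hbox (0,2) (by decide))
    have h20 : ∀ x : Fin n, ¬((b : ℕ) < x ∧ (π x : ℕ) < π a) :=
      (rawBox_20 π a b).mp (hbox (2,0) (by decide))
    have h21 : ∀ x : Fin n, ¬((b : ℕ) < x ∧ (π a : ℕ) < π x ∧ (π x : ℕ) < π b) :=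
      (rawBox_21 π a b).mp (hbox (2,1) (by decide))
    -- key: anything right of b has value above π b
    have hright : ∀ x : Fin n, (b : ℕ) < x → (π b : ℕ) < π x := by
      intro x hx
      rcases lt_trichotomy ((π x : ℕ)) ((π a : ℕ)) with hc | hc | hc
      · exact absurd ⟨hx, hc⟩ (h20 x)
      · exfalso
        have : π x = π a := Fin.ext hc
        have : x = a := π.injective this
        omega
      · rcases lt_trichotomy ((π x : ℕ)) ((π b : ℕ)) with hd | hd | hd
        · exact absurd ⟨hx, hc, hd⟩ (h21 x)
        · exfalso
          have : π x = π b := Fin.ext hd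
          have : x = b := π.injective this
          omega
        · exact hd
    by_cases hempty : ∀ x : Fin n, ¬((a : ℕ) < x ∧ (x : ℕ) < b ∧ (π x : ℕ) < π a)
    · -- box (1,0) already empty: same occurrence works
      refine ⟨a, b, hab, hv, ?_⟩
      intro p hp
      fin_cases hp
      · exact (rawBox_02 π a b).mpr h02
      · exact (rawBox_10 π a b).mpr hempty
      · exact (rawBox_20 π a b).mpr h20
      · exact (rawBox_21 π a b).mpr h21
    · -- pick x of minimal value in the box between a and b below π a
      push_neg at hempty
      set T : Finset (Fin n) :=
        Finset.univ.filter (fun x => (a : ℕ) < x ∧ (x : ℕ) < b ∧ (π x : ℕ) < π a) with hT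
      have hTne : T.Nonempty := by
        obtain ⟨x, hx⟩ := hempty
        exact ⟨x, by simp only [hT, Finset.mem_filter, Finset.mem_univ, true_and]; exact hx⟩
      obtain ⟨c, hcT, hcmin⟩ := T.exists_min_image (fun x => (π x : ℕ)) hTne
      simp only [hT, Finset.mem_filter, Finset.mem_univ, true_and] at hcT
      obtain ⟨hac, hcb, hcv⟩ := hcT
      have hcmin' : ∀ y : Fin n, (a : ℕ) < y → (y : ℕ) < b → (π y : ℕ) < π a →
          (π c : ℕ) ≤ π y := by
        intro y h1 h2 h3
        exact hcmin y (by simp only [hT, Finset.mem_filter, Finset.mem_univ, true_and]; exact ⟨h1, h2, h3⟩)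
      refine ⟨c, b, by exact Fin.lt_def.mpr hcb, ?_, ?_⟩
      · exact Fin.lt_def.mpr (by omega)
      intro p hp
      fin_cases hp
      · -- (0,2): nothing left of c above π b
        refine (rawBox_02 π c b).mpr ?_
        rintro y ⟨hy1, hy2⟩
        rcases lt_trichotomy ((y : ℕ)) ((a : ℕ)) with hc' | hc' | hc'
        · exact h02 y ⟨hc', hy2⟩
        · have : y = a := Fin.ext hc'
          subst this; omega
        · -- a < y < c : 231 pattern a, y, c
          exact h ⟨a, y, c, Fin.lt_def.mpr hc', Fin.lt_def.mpr hy1,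
            Fin.lt_def.mpr (by omega), Fin.lt_def.mpr (by omega)⟩
      · -- (1,0): minimality of π c
        refine (rawBox_10 π c b).mpr ?_
        rintro y ⟨hy1, hy2, hy3⟩
        have := hcmin' y (by omega) hy2 (by omega)
        omega
      · -- (2,0)
        refine (rawBox_20 π c b).mpr ?_
        rintro y ⟨hy1, hy2⟩
        have := hright y hy1
        omega
      · -- (2,1)
        refine (rawBox_21 π c b).mpr ?_
        rintro y ⟨hy1, hy2, hy3⟩
        have := hright y hy1
        omega
  · -- easy direction: R₁ ⊆ R₂
    rintro ⟨a, b, hab, hv, hbox⟩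
    refine ⟨a, b, hab, hv, fun p hp => hbox p ?_⟩
    fin_cases hp <;> decide
end

section
/- Let m₁ = (12, {⟨0,0⟩,⟨0,2⟩,⟨1,1⟩,⟨1,2⟩,⟨2,1⟩}) and m₂ = (12, {⟨0,0⟩,⟨0,1⟩,⟨0,2⟩,⟨1,1⟩,⟨1,2⟩,⟨2,1⟩}). A permutation avoiding 321 avoids m₁ if and only if it avoids m₂. -/
/-- `π` avoids the classical pattern 321. -/
def Avoids321 {n : ℕ} (π : Equiv.Perm (Fin n)) : Prop :=
  ¬ ∃ i j k : Fin n, i < j ∧ j < k ∧ π j < π i ∧ π k < π j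

/-- A plain reformulation of an occurrence of the mesh pattern
`(12, {(0,0),(0,2),(1,1),(1,2),(2,1)})`. -/
def Occ1 {n : ℕ} (π : Equiv.Perm (Fin n)) (p q : Fin n) : Prop :=
  (p:ℕ) < q ∧ (π p:ℕ) < π q ∧
  (∀ x : Fin n, ¬((x:ℕ) < p ∧ (π x:ℕ) < π p)) ∧
  (∀ x : Fin n, ¬((x:ℕ) < p ∧ (π q:ℕ) < π x)) ∧
  (∀ x : Fin n, ¬((p:ℕ) < x ∧ (x:ℕ) < q ∧ (π p:ℕ) < π x ∧ (π x:ℕ) < π q)) ∧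
  (∀ x : Fin n, ¬((p:ℕ) < x ∧ (x:ℕ) < q ∧ (π q:ℕ) < π x)) ∧
  (∀ x : Fin n, ¬((q:ℕ) < x ∧ (π p:ℕ) < π x ∧ (π x:ℕ) < π q))

lemma contains_iff1 {n : ℕ} (π : Equiv.Perm (Fin n)) :
    ContainsMesh (1 : Equiv.Perm (Fin 2))
        ({(0,0),(0,2),(1,1),(1,2),(2,1)} : Finset (ℕ × ℕ)) π ↔
      ∃ p q : Fin n, Occ1 π p q := by
  constructor
  · rintro ⟨α, β, hα, hβ, hτ, hR⟩
    have e0 : π (α 0) = β 0 := by simpa using hτ 0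
    have e1 : π (α 1) = β 1 := by simpa using hτ 1
    have v0 : ((π (α 0)):ℕ) = β 0 := by rw [e0]
    have v1 : ((π (α 1)):ℕ) = β 1 := by rw [e1]
    have hA : (α 0 : ℕ) < α 1 := hα (by decide : (0:Fin 2) < 1)
    have hB : (β 0 : ℕ) < β 1 := hβ (by decide : (0:Fin 2) < 1)
    have H00 : ∀ x : Fin n, ¬(0 < (x:ℕ)+1 ∧ (x:ℕ)+1 < (α 0:ℕ)+1 ∧
        0 < (π x:ℕ)+1 ∧ (π x:ℕ)+1 < (β 0:ℕ)+1) :=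
      fun x => hR (0,0) (by norm_num) x
    have H02 : ∀ x : Fin n, ¬(0 < (x:ℕ)+1 ∧ (x:ℕ)+1 < (α 0:ℕ)+1 ∧
        (β 1:ℕ)+1 < (π x:ℕ)+1 ∧ (π x:ℕ)+1 < n+1) :=
      fun x => hR (0,2) (by norm_num) x
    have H11 : ∀ x : Fin n, ¬((α 0:ℕ)+1 < (x:ℕ)+1 ∧ (x:ℕ)+1 < (α 1:ℕ)+1 ∧
        (β 0:ℕ)+1 < (π x:ℕ)+1 ∧ (π x:ℕ)+1 < (β 1:ℕ)+1) :=
      fun x => hR (1,1) (by norm_num) x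
    have H12 : ∀ x : Fin n, ¬((α 0:ℕ)+1 < (x:ℕ)+1 ∧ (x:ℕ)+1 < (α 1:ℕ)+1 ∧
        (β 1:ℕ)+1 < (π x:ℕ)+1 ∧ (π x:ℕ)+1 < n+1) :=
      fun x => hR (1,2) (by norm_num) x
    have H21 : ∀ x : Fin n, ¬((α 1:ℕ)+1 < (x:ℕ)+1 ∧ (x:ℕ)+1 < n+1 ∧
        (β 0:ℕ)+1 < (π x:ℕ)+1 ∧ (π x:ℕ)+1 < (β 1:ℕ)+1) :=
      fun x => hR (2,1) (by norm_num) x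
    refine ⟨α 0, α 1, hA, by omega, ?_, ?_, ?_, ?_, ?_⟩
    · exact fun x hx => H00 x (by omega)
    · exact fun x hx => H02 x (by have := (π x).isLt; omega)
    · exact fun x hx => H11 x (by omega)
    · exact fun x hx => H12 x (by have := (π x).isLt; omega)
    · exact fun x hx => H21 x (by have := x.isLt; omega)
  · rintro ⟨p, q, h1, h2, h3, h4, h5, h6, h7⟩
    refine ⟨fun i => if (i:ℕ) = 0 then p else q,
            fun i => if (i:ℕ) = 0 then π p else π q, ?_, ?_, ?_, ?_⟩
    · intro a b hab
      have ht : a = 0 ∧ b = 1 := by revert hab; revert a b; decide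
      obtain ⟨rfl, rfl⟩ := ht
      show (if ((0:Fin 2):ℕ) = 0 then p else q) < (if ((1:Fin 2):ℕ) = 0 then p else q)
      simp only [Fin.val_zero, Fin.val_one]
      norm_num
      exact h1
    · intro a b hab
      have ht : a = 0 ∧ b = 1 := by revert hab; revert a b; decide
      obtain ⟨rfl, rfl⟩ := ht
      show (if ((0:Fin 2):ℕ) = 0 then π p else π q) < (if ((1:Fin 2):ℕ) = 0 then π p else π q)
      simp only [Fin.val_zero, Fin.val_one]
      norm_num
      exact h2
    · intro i; fin_cases i <;> simp
    · intro r hr x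
      simp only [Finset.mem_insert, Finset.mem_singleton] at hr
      rcases hr with rfl | rfl | rfl | rfl | rfl
      · show ¬(0 < (x:ℕ)+1 ∧ (x:ℕ)+1 < (p:ℕ)+1 ∧
            0 < (π x:ℕ)+1 ∧ (π x:ℕ)+1 < (π p:ℕ)+1)
        exact fun hc => h3 x (by omega)
      · show ¬(0 < (x:ℕ)+1 ∧ (x:ℕ)+1 < (p:ℕ)+1 ∧
            (π q:ℕ)+1 < (π x:ℕ)+1 ∧ (π x:ℕ)+1 < n+1)
        exact fun hc => h4 x (by omega)
      · show ¬((p:ℕ)+1 < (x:ℕ)+1 ∧ (x:ℕ)+1 < (q:ℕ)+1 ∧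
            (π p:ℕ)+1 < (π x:ℕ)+1 ∧ (π x:ℕ)+1 < (π q:ℕ)+1)
        exact fun hc => h5 x (by omega)
      · show ¬((p:ℕ)+1 < (x:ℕ)+1 ∧ (x:ℕ)+1 < (q:ℕ)+1 ∧
            (π q:ℕ)+1 < (π x:ℕ)+1 ∧ (π x:ℕ)+1 < n+1)
        exact fun hc => h6 x (by omega)
      · show ¬((q:ℕ)+1 < (x:ℕ)+1 ∧ (x:ℕ)+1 < n+1 ∧
            (π p:ℕ)+1 < (π x:ℕ)+1 ∧ (π x:ℕ)+1 < (π q:ℕ)+1)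
        exact fun hc => h7 x (by omega)

lemma contains_iff2 {n : ℕ} (π : Equiv.Perm (Fin n)) :
    ContainsMesh (1 : Equiv.Perm (Fin 2))
        ({(0,0),(0,1),(0,2),(1,1),(1,2),(2,1)} : Finset (ℕ × ℕ)) π ↔
      ∃ p q : Fin n, Occ1 π p q ∧
        ∀ x : Fin n, ¬((x:ℕ) < p ∧ (π p:ℕ) < π x ∧ (π x:ℕ) < π q) := by
  constructor
  · rintro ⟨α, β, hα, hβ, hτ, hR⟩
    have e0 : π (α 0) = β 0 := by simpa using hτ 0
    have e1 : π (α 1) = β 1 := by simpa using hτ 1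
    have v0 : ((π (α 0)):ℕ) = β 0 := by rw [e0]
    have v1 : ((π (α 1)):ℕ) = β 1 := by rw [e1]
    have hA : (α 0 : ℕ) < α 1 := hα (by decide : (0:Fin 2) < 1)
    have hB : (β 0 : ℕ) < β 1 := hβ (by decide : (0:Fin 2) < 1)
    have H00 : ∀ x : Fin n, ¬(0 < (x:ℕ)+1 ∧ (x:ℕ)+1 < (α 0:ℕ)+1 ∧
        0 < (π x:ℕ)+1 ∧ (π x:ℕ)+1 < (β 0:ℕ)+1) :=
      fun x => hR (0,0) (by norm_num) x
    have H01 : ∀ x : Fin n, ¬(0 < (x:ℕ)+1 ∧ (x:ℕ)+1 < (α 0:ℕ)+1 ∧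
        (β 0:ℕ)+1 < (π x:ℕ)+1 ∧ (π x:ℕ)+1 < (β 1:ℕ)+1) :=
      fun x => hR (0,1) (by norm_num) x
    have H02 : ∀ x : Fin n, ¬(0 < (x:ℕ)+1 ∧ (x:ℕ)+1 < (α 0:ℕ)+1 ∧
        (β 1:ℕ)+1 < (π x:ℕ)+1 ∧ (π x:ℕ)+1 < n+1) :=
      fun x => hR (0,2) (by norm_num) x
    have H11 : ∀ x : Fin n, ¬((α 0:ℕ)+1 < (x:ℕ)+1 ∧ (x:ℕ)+1 < (α 1:ℕ)+1 ∧
        (β 0:ℕ)+1 < (π x:ℕ)+1 ∧ (π x:ℕ)+1 < (β 1:ℕ)+1) :=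
      fun x => hR (1,1) (by norm_num) x
    have H12 : ∀ x : Fin n, ¬((α 0:ℕ)+1 < (x:ℕ)+1 ∧ (x:ℕ)+1 < (α 1:ℕ)+1 ∧
        (β 1:ℕ)+1 < (π x:ℕ)+1 ∧ (π x:ℕ)+1 < n+1) :=
      fun x => hR (1,2) (by norm_num) x
    have H21 : ∀ x : Fin n, ¬((α 1:ℕ)+1 < (x:ℕ)+1 ∧ (x:ℕ)+1 < n+1 ∧
        (β 0:ℕ)+1 < (π x:ℕ)+1 ∧ (π x:ℕ)+1 < (β 1:ℕ)+1) :=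
      fun x => hR (2,1) (by norm_num) x
    refine ⟨α 0, α 1, ⟨hA, by omega, ?_, ?_, ?_, ?_, ?_⟩, ?_⟩
    · exact fun x hx => H00 x (by omega)
    · exact fun x hx => H02 x (by have := (π x).isLt; omega)
    · exact fun x hx => H11 x (by omega)
    · exact fun x hx => H12 x (by have := (π x).isLt; omega)
    · exact fun x hx => H21 x (by have := x.isLt; omega)
    · exact fun x hx => H01 x (by omega)
  · rintro ⟨p, q, ⟨h1, h2, h3, h4, h5, h6, h7⟩, h8⟩
    refine ⟨fun i => if (i:ℕ) = 0 then p else q,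
            fun i => if (i:ℕ) = 0 then π p else π q, ?_, ?_, ?_, ?_⟩
    · intro a b hab
      have ht : a = 0 ∧ b = 1 := by revert hab; revert a b; decide
      obtain ⟨rfl, rfl⟩ := ht
      show (if ((0:Fin 2):ℕ) = 0 then p else q) < (if ((1:Fin 2):ℕ) = 0 then p else q)
      simp only [Fin.val_zero, Fin.val_one]
      norm_num
      exact h1
    · intro a b hab
      have ht : a = 0 ∧ b = 1 := by revert hab; revert a b; decide
      obtain ⟨rfl, rfl⟩ := ht
      show (if ((0:Fin 2):ℕ) = 0 then π p else π q) < (if ((1:Fin 2):ℕ) = 0 then π p else π q)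
      simp only [Fin.val_zero, Fin.val_one]
      norm_num
      exact h2
    · intro i; fin_cases i <;> simp
    · intro r hr x
      simp only [Finset.mem_insert, Finset.mem_singleton] at hr
      rcases hr with rfl | rfl | rfl | rfl | rfl | rfl
      · show ¬(0 < (x:ℕ)+1 ∧ (x:ℕ)+1 < (p:ℕ)+1 ∧
            0 < (π x:ℕ)+1 ∧ (π x:ℕ)+1 < (π p:ℕ)+1)
        exact fun hc => h3 x (by omega)
      · show ¬(0 < (x:ℕ)+1 ∧ (x:ℕ)+1 < (p:ℕ)+1 ∧
            (π p:ℕ)+1 < (π x:ℕ)+1 ∧ (π x:ℕ)+1 < (π q:ℕ)+1)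
        exact fun hc => h8 x (by omega)
      · show ¬(0 < (x:ℕ)+1 ∧ (x:ℕ)+1 < (p:ℕ)+1 ∧
            (π q:ℕ)+1 < (π x:ℕ)+1 ∧ (π x:ℕ)+1 < n+1)
        exact fun hc => h4 x (by omega)
      · show ¬((p:ℕ)+1 < (x:ℕ)+1 ∧ (x:ℕ)+1 < (q:ℕ)+1 ∧
            (π p:ℕ)+1 < (π x:ℕ)+1 ∧ (π x:ℕ)+1 < (π q:ℕ)+1)
        exact fun hc => h5 x (by omega)
      · show ¬((p:ℕ)+1 < (x:ℕ)+1 ∧ (x:ℕ)+1 < (q:ℕ)+1 ∧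
            (π q:ℕ)+1 < (π x:ℕ)+1 ∧ (π x:ℕ)+1 < n+1)
        exact fun hc => h6 x (by omega)
      · show ¬((q:ℕ)+1 < (x:ℕ)+1 ∧ (x:ℕ)+1 < n+1 ∧
            (π p:ℕ)+1 < (π x:ℕ)+1 ∧ (π x:ℕ)+1 < (π q:ℕ)+1)
        exact fun hc => h7 x (by omega)

lemma key_lemma {n : ℕ} (π : Equiv.Perm (Fin n)) (h321 : Avoids321 π) {p q : Fin n}
    (h : Occ1 π p q) :
    ∃ p' q' : Fin n, Occ1 π p' q' ∧
      ∀ x : Fin n, ¬((x:ℕ) < p' ∧ (π p':ℕ) < π x ∧ (π x:ℕ) < π q') := by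
  classical
  obtain ⟨hpq, hab, h00, h02, h11, h12, h21⟩ := h
  have hval : ∀ y z : Fin n, (π y:ℕ) = (π z:ℕ) → y = z :=
    fun y z hh => π.injective (Fin.val_injective hh)
  have hidx : ∀ y z : Fin n, (y:ℕ) = (z:ℕ) → y = z := fun y z hh => Fin.val_injective hh
  set T : Finset (Fin n) :=
    Finset.univ.filter (fun x => (x:ℕ) < p ∧ (π p:ℕ) < π x ∧ (π x:ℕ) < π q) with hTdef
  have hmemT : ∀ x : Fin n, x ∈ T ↔ ((x:ℕ) < p ∧ (π p:ℕ) < π x ∧ (π x:ℕ) < π q) := by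
    intro x; simp [hTdef]
  by_cases hTe : T = ∅
  · refine ⟨p, q, ⟨hpq, hab, h00, h02, h11, h12, h21⟩, ?_⟩
    intro x hx
    have hxT : x ∈ T := (hmemT x).mpr hx
    rw [hTe] at hxT
    exact absurd hxT (Finset.notMem_empty x)
  have hne : T.Nonempty := Finset.nonempty_iff_ne_empty.mpr hTe
  have hinc : ∀ y z : Fin n, y ∈ T → z ∈ T → (y:ℕ) < z → (π y:ℕ) < π z := by
    intro y z hy hz hyz
    obtain ⟨hy1, hy2, hy3⟩ := (hmemT y).mp hy
    obtain ⟨hz1, hz2, hz3⟩ := (hmemT z).mp hz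
    rcases lt_trichotomy ((π y : Fin n):ℕ) ((π z : Fin n):ℕ) with hh | hh | hh
    · exact hh
    · exact absurd (congrArg Fin.val (hval _ _ hh)) (by omega)
    · exact absurd ⟨y, z, p, Fin.lt_def.mpr hyz, Fin.lt_def.mpr hz1,
        Fin.lt_def.mpr hh, Fin.lt_def.mpr hz2⟩ h321
  set t1 := T.min' hne with ht1def
  have ht1T : t1 ∈ T := T.min'_mem hne
  obtain ⟨ht1p, ht1a, ht1b⟩ := (hmemT t1).mp ht1T
  have ht1min : ∀ y, y ∈ T → (t1:ℕ) ≤ y := fun y hy => Fin.le_def.mp (T.min'_le y hy)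
  by_cases hsing : ∀ y, y ∈ T → y = t1
  · -- T = {t1} : use the pair (t1, q)
    refine ⟨t1, q, ⟨by omega, by omega, ?_, ?_, ?_, ?_, ?_⟩, ?_⟩
    · rintro x ⟨hx1, hx2⟩
      rcases lt_trichotomy ((π x : Fin n):ℕ) ((π p : Fin n):ℕ) with hh | hh | hh
      · exact h00 x ⟨by omega, hh⟩
      · exact absurd (congrArg Fin.val (hval _ _ hh)) (by omega)
      · have hxT : x ∈ T := (hmemT x).mpr ⟨by omega, hh, by omega⟩
        exact absurd (congrArg Fin.val (hsing x hxT)) (by omega)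
    · rintro x ⟨hx1, hx2⟩
      exact h02 x ⟨by omega, hx2⟩
    · rintro x ⟨hx1, hx2, hx3, hx4⟩
      rcases lt_trichotomy ((x:ℕ)) ((p:ℕ)) with hh | hh | hh
      · have hxT : x ∈ T := (hmemT x).mpr ⟨hh, by omega, hx4⟩
        exact absurd (congrArg Fin.val (hsing x hxT)) (by omega)
      · have hxe : x = p := hidx _ _ hh
        have : (π x:ℕ) = π p := by rw [hxe]
        omega
      · exact h11 x ⟨hh, hx2, by omega, hx4⟩
    · rintro x ⟨hx1, hx2, hx3⟩
      rcases lt_trichotomy ((x:ℕ)) ((p:ℕ)) with hh | hh | hh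
      · exact h02 x ⟨hh, hx3⟩
      · have hxe : x = p := hidx _ _ hh
        have : (π x:ℕ) = π p := by rw [hxe]
        omega
      · exact h12 x ⟨hh, hx2, hx3⟩
    · rintro x ⟨hx1, hx2, hx3⟩
      exact h21 x ⟨hx1, by omega, hx3⟩
    · rintro x ⟨hx1, hx2, hx3⟩
      have hxT : x ∈ T := (hmemT x).mpr ⟨by omega, by omega, hx3⟩
      exact absurd (congrArg Fin.val (hsing x hxT)) (by omega)
  · -- T has at least two elements : use (t1, t2)
    push_neg at hsing
    obtain ⟨t, htT, htne⟩ := hsing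
    have hne2 : (T.erase t1).Nonempty := ⟨t, Finset.mem_erase.mpr ⟨htne, htT⟩⟩
    set t2 := (T.erase t1).min' hne2 with ht2def
    have ht2T' : t2 ∈ T.erase t1 := Finset.min'_mem _ hne2
    have ht2T : t2 ∈ T := Finset.mem_of_mem_erase ht2T'
    have ht2ne : t2 ≠ t1 := Finset.ne_of_mem_erase ht2T'
    obtain ⟨ht2p, ht2a, ht2b⟩ := (hmemT t2).mp ht2T
    have ht2min : ∀ y, y ∈ T → y ≠ t1 → (t2:ℕ) ≤ y :=
      fun y hy hyne => Fin.le_def.mp (Finset.min'_le _ y (Finset.mem_erase.mpr ⟨hyne, hy⟩))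
    have h12lt : (t1:ℕ) < t2 := by
      have hle := ht1min t2 ht2T
      rcases lt_or_eq_of_le hle with hh | hh
      · exact hh
      · exact absurd (hidx _ _ hh.symm) ht2ne
    have hv12 : (π t1:ℕ) < π t2 := hinc _ _ ht1T ht2T h12lt
    refine ⟨t1, t2, ⟨h12lt, hv12, ?_, ?_, ?_, ?_, ?_⟩, ?_⟩
    · rintro x ⟨hx1, hx2⟩
      rcases lt_trichotomy ((π x : Fin n):ℕ) ((π p : Fin n):ℕ) with hh | hh | hh
      · exact h00 x ⟨by omega, hh⟩
      · exact absurd (congrArg Fin.val (hval _ _ hh)) (by omega)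
      · have hxT : x ∈ T := (hmemT x).mpr ⟨by omega, hh, by omega⟩
        have := ht1min x hxT
        omega
    · rintro x ⟨hx1, hx2⟩
      rcases lt_trichotomy ((π x : Fin n):ℕ) ((π q : Fin n):ℕ) with hh | hh | hh
      · have hxT : x ∈ T := (hmemT x).mpr ⟨by omega, by omega, hh⟩
        have := ht1min x hxT
        omega
      · exact absurd (congrArg Fin.val (hval _ _ hh)) (by omega)
      · exact h02 x ⟨by omega, hh⟩
    · rintro x ⟨hx1, hx2, hx3, hx4⟩
      have hxT : x ∈ T := (hmemT x).mpr ⟨by omega, by omega, by omega⟩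
      have := ht2min x hxT (by intro e; have := congrArg Fin.val e; omega)
      omega
    · rintro x ⟨hx1, hx2, hx3⟩
      rcases lt_trichotomy ((π x : Fin n):ℕ) ((π q : Fin n):ℕ) with hh | hh | hh
      · have hxT : x ∈ T := (hmemT x).mpr ⟨by omega, by omega, hh⟩
        have := ht2min x hxT (by intro e; have := congrArg Fin.val e; omega)
        omega
      · exact absurd (congrArg Fin.val (hval _ _ hh)) (by omega)
      · exact h02 x ⟨by omega, hh⟩
    · rintro x ⟨hx1, hx2, hx3⟩
      rcases lt_trichotomy ((x:ℕ)) ((p:ℕ)) with hh | hh | hh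
      · have hxT : x ∈ T := (hmemT x).mpr ⟨hh, by omega, by omega⟩
        have := hinc t2 x ht2T hxT hx1
        omega
      · have hxe : x = p := hidx _ _ hh
        have : (π x:ℕ) = π p := by rw [hxe]
        omega
      · rcases lt_trichotomy ((x:ℕ)) ((q:ℕ)) with hh2 | hh2 | hh2
        · exact h11 x ⟨hh, hh2, by omega, by omega⟩
        · have hxe : x = q := hidx _ _ hh2
          have : (π x:ℕ) = π q := by rw [hxe]
          omega
        · exact h21 x ⟨hh2, by omega, by omega⟩
    · rintro x ⟨hx1, hx2, hx3⟩
      have hxT : x ∈ T := (hmemT x).mpr ⟨by omega, by omega, by omega⟩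
      have := ht1min x hxT
      omega

/-- Under the dominating pattern 321, the mesh patterns
`(12, {⟨0,0⟩,⟨0,2⟩,⟨1,1⟩,⟨1,2⟩,⟨2,1⟩})` and
`(12, {⟨0,0⟩,⟨0,1⟩,⟨0,2⟩,⟨1,1⟩,⟨1,2⟩,⟨2,1⟩})` are coincident. -/
theorem coincidence_321_12_patterns {n : ℕ} (π : Equiv.Perm (Fin n))
    (h : Avoids321 π) :
    AvoidsMesh (1 : Equiv.Perm (Fin 2))
        ({(0,0),(0,2),(1,1),(1,2),(2,1)} : Finset (ℕ × ℕ)) π ↔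
      AvoidsMesh (1 : Equiv.Perm (Fin 2))
        ({(0,0),(0,1),(0,2),(1,1),(1,2),(2,1)} : Finset (ℕ × ℕ)) π := by
  constructor
  · intro hA hC
    obtain ⟨α, β, h1, h2, h3, h4⟩ := hC
    refine hA ⟨α, β, h1, h2, h3, fun r hr x => h4 r ?_ x⟩
    simp only [Finset.mem_insert, Finset.mem_singleton] at hr ⊢
    tauto
  · intro hA hC
    obtain ⟨p, q, hocc⟩ := (contains_iff1 π).mp hC
    obtain ⟨p', q', h1', h2'⟩ := key_lemma π h hocc
    exact hA ((contains_iff2 π).mpr ⟨p', q', h1', h2'⟩)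
end
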